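/- arXiv:1809.04275 — 4 statements merged into one kernel-verified Lean document; each statement's English description precedes it below -/
import Mathlib

section
/- (Deviation bound for nilpotent traceless Gaussian quadratic forms.) Let d ≥ 1 be an integer, let v be a random vector in ℝ^d with i.i.d. standard normal components, and let A be a (not necessarily symmetric) d×d real matrix with trace(A) = 0 and A·A = 0 (the zero matrix). For every ε > 0: if the largest eigenvalue of A + A' is positive, then P( |v'Av| ≥ ε ) ≤ 4·exp( −(d/2)·G(d·√(λ_d(A'A)/2), ε/2) ), where λ_d(A'A) is the largest eigenvalue of A'A and G(x,y) = y/x − log((x+y)/x); and if the largest eigenvalue of A + A' is 0, then P( |v'Av| ≥ ε ) = 0. -/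
open Matrix MeasureTheory ProbabilityTheory

namespace Stmt11

/-- The rate function `G(x,y) = y/x - log((x+y)/x)`. -/
noncomputable def G (x y : ℝ) : ℝ := y / x - Real.log ((x + y) / x)



/-- factor monotonicity -/
lemma factor_le {α β : ℝ} (hα1 : α < 1) (hβ1 : β < 1) (hprod : 0 ≤ α * (β - α)) :
    Real.exp (-α/2) * (Real.sqrt (1-α))⁻¹ ≤ Real.exp (-β/2) * (Real.sqrt (1-β))⁻¹ := by
  have hα : (0:ℝ) < 1 - α := by linarith
  have hβ : (0:ℝ) < 1 - β := by linarith
  have h1ab : (0:ℝ) < 1 + α - β := by nlinarith [sq_nonneg α, sq_nonneg (α - β)]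
  have h2 := Real.add_one_le_exp (α - β)
  have core : Real.exp (β - α) * (1 - β) ≤ 1 - α := by
    have hinv : Real.exp (β - α) ≤ (1 + α - β)⁻¹ := by
      rw [le_inv_comm₀ (Real.exp_pos _) h1ab, ← Real.exp_neg]
      calc 1 + α - β ≤ Real.exp (α - β) := by linarith
        _ = Real.exp (-(β - α)) := by ring_nf
    calc Real.exp (β - α) * (1 - β) ≤ (1 + α - β)⁻¹ * (1 - β) := by
          apply mul_le_mul_of_nonneg_right hinv hβ.le
      _ ≤ 1 - α := by
          rw [inv_mul_le_iff₀ h1ab]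
          nlinarith
  have key : Real.exp (-α) / (1 - α) ≤ Real.exp (-β) / (1 - β) := by
    rw [div_le_div_iff₀ hα hβ]
    have : Real.exp (-α) = Real.exp (β - α) * Real.exp (-β) := by
      rw [← Real.exp_add]; ring_nf
    rw [this]
    nlinarith [Real.exp_pos (-β)]
  have e1 : Real.exp (-α/2) * (Real.sqrt (1-α))⁻¹ = Real.sqrt (Real.exp (-α) / (1-α)) := by
    rw [Real.sqrt_div' _ hα.le, ← Real.exp_half]; ring
  have e2 : Real.exp (-β/2) * (Real.sqrt (1-β))⁻¹ = Real.sqrt (Real.exp (-β) / (1-β)) := by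
    rw [Real.sqrt_div' _ hβ.le, ← Real.exp_half]; ring
  rw [e1, e2]
  exact Real.sqrt_le_sqrt key

/-- artanh-type inequality -/
lemma two_mul_le_log_div {s : ℝ} (h0 : 0 ≤ s) (h1 : s < 1) :
    2*s ≤ Real.log (1+s) - Real.log (1-s) := by
  have key : ∀ r : ℝ, 0 ≤ r → Real.exp (2*r) * (1-r) ≤ 1+r := by
    intro r hr
    set g : ℝ → ℝ := fun r => (1+r) - Real.exp (2*r) * (1-r) with hg
    have hd : ∀ y : ℝ, HasDerivAt g (1 - (Real.exp (2*y) * 2 * (1-y) + Real.exp (2*y) * (-1))) y := by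
      intro y
      have h1' : HasDerivAt (fun z : ℝ => Real.exp (2*z)) (Real.exp (2*y) * 2) y := by
        simpa using ((hasDerivAt_id y).const_mul 2).exp
      have h2' : HasDerivAt (fun z : ℝ => 1 - z) (-1) y := by
        simpa using ((hasDerivAt_id y).const_sub 1)
      have h3' := h1'.mul h2'
      have h4' : HasDerivAt (fun z : ℝ => 1 + z) 1 y := by
        simpa using ((hasDerivAt_id y).const_add 1)
      exact h4'.sub h3'
    have hmono : Monotone g := by
      apply monotone_of_deriv_nonneg
      · exact fun y => (hd y).differentiableAt
      · intro y
        rw [(hd y).deriv]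
        have := Real.add_one_le_exp (-(2*y))
        have hpos := Real.exp_pos (2*y)
        have hee : Real.exp (2*y) * Real.exp (-(2*y)) = 1 := by
          rw [← Real.exp_add]; simp
        nlinarith
    have := hmono hr
    simp [hg] at this
    linarith
  have h2 := key s h0
  have hpos1 : (0:ℝ) < 1 + s := by linarith
  have hpos2 : (0:ℝ) < 1 - s := by linarith
  have : Real.log (Real.exp (2*s) * (1-s)) ≤ Real.log (1+s) :=
    Real.log_le_log (by positivity) h2
  rw [Real.log_mul (Real.exp_pos _).ne' hpos2.ne', Real.log_exp] at this
  linarith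



noncomputable def stdPdf (n : ℕ) : (Fin n → ℝ) → NNReal :=
  fun x => ∏ i, (gaussianPDFReal 0 1 (x i)).toNNReal

noncomputable def stdG (n : ℕ) : Measure (Fin n → ℝ) :=
  volume.withDensity fun x => (stdPdf n x : ENNReal)

lemma measurable_stdPdf (n : ℕ) : Measurable (stdPdf n) := by
  apply Finset.measurable_prod
  intro i _
  exact ((measurable_gaussianPDFReal 0 1).comp (measurable_pi_apply i)).real_toNNReal

lemma gaussianPDFReal_zero_one (y : ℝ) :
    gaussianPDFReal 0 1 y = (Real.sqrt (2*Real.pi))⁻¹ * Real.exp (-(y^2)/2) := by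
  rw [gaussianPDFReal]
  norm_num

lemma stdPdf_coe (n : ℕ) (x : Fin n → ℝ) :
    (stdPdf n x : ENNReal) = ENNReal.ofReal (∏ i, gaussianPDFReal 0 1 (x i)) := by
  rw [stdPdf, ENNReal.coe_finset_prod,
    ENNReal.ofReal_prod_of_nonneg (fun i _ => gaussianPDFReal_nonneg 0 1 (x i))]
  rfl

lemma stdPdf_coe' (n : ℕ) (x : Fin n → ℝ) :
    (stdPdf n x : ENNReal) =
      ENNReal.ofReal (((Real.sqrt (2*Real.pi))⁻¹)^n * Real.exp (-(∑ i, (x i)^2)/2)) := by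
  rw [stdPdf_coe]
  congr 1
  simp only [gaussianPDFReal_zero_one]
  rw [Finset.prod_mul_distrib, Finset.prod_const, ← Real.exp_sum]
  simp [Finset.card_univ, neg_div, Finset.sum_div, Finset.sum_neg_distrib]

lemma stdG_eq_pi (n : ℕ) :
    Measure.pi (fun _ : Fin n => gaussianReal 0 1) = stdG n := by
  apply Measure.pi_eq
  intro s hs
  have hbox : MeasurableSet (Set.pi Set.univ s) := MeasurableSet.univ_pi hs
  rw [stdG, withDensity_apply _ hbox, ← lintegral_indicator hbox]
  set g : Fin n → ℝ → ℝ := fun i => Set.indicator (s i) (gaussianPDFReal 0 1) with hg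
  have hpt : ∀ x : Fin n → ℝ, Set.indicator (Set.pi Set.univ s)
      (fun x => (stdPdf n x : ENNReal)) x = ENNReal.ofReal (∏ i, g i (x i)) := by
    intro x
    by_cases hx : x ∈ Set.pi Set.univ s
    · rw [Set.indicator_of_mem hx, stdPdf_coe]
      congr 1
      apply Finset.prod_congr rfl
      intro i _
      rw [hg]
      simp only [Set.indicator_of_mem (hx i (Set.mem_univ i))]
    · rw [Set.indicator_of_notMem hx]
      have hex : ∃ i, x i ∉ s i := by simpa [Set.mem_pi] using hx
      obtain ⟨i, hi⟩ := hex
      rw [Finset.prod_eq_zero (Finset.mem_univ i) (by rw [hg]; simp [Set.indicator_of_notMem hi])]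
      simp
  have hint : ∀ i, Integrable (g i) := fun i =>
    (integrable_gaussianPDFReal 0 1).indicator (hs i)
  calc ∫⁻ x : Fin n → ℝ, Set.indicator (Set.pi Set.univ s) (fun x => (stdPdf n x : ENNReal)) x
      = ∫⁻ x : Fin n → ℝ, ENNReal.ofReal (∏ i, g i (x i)) := by
        apply lintegral_congr hpt
    _ = ENNReal.ofReal (∫ x : Fin n → ℝ, ∏ i, g i (x i)) := by
        have hI : Integrable (fun x : Fin n → ℝ => ∏ i, g i (x i)) := Integrable.fintype_prod hint
        rw [ofReal_integral_eq_lintegral_ofReal hI]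
        exact ae_of_all _ fun x => Finset.prod_nonneg fun i _ =>
          Set.indicator_nonneg (fun y _ => gaussianPDFReal_nonneg 0 1 y) _
    _ = ENNReal.ofReal (∏ i, ∫ y : ℝ, g i y) := by
        rw [integral_fintype_prod_volume_eq_prod]
    _ = ∏ i, ENNReal.ofReal (∫ y : ℝ, g i y) := by
        rw [ENNReal.ofReal_prod_of_nonneg]
        intro i _
        exact integral_nonneg (Set.indicator_nonneg (fun y _ => gaussianPDFReal_nonneg 0 1 y))
    _ = ∏ i, gaussianReal 0 1 (s i) := by
        apply Finset.prod_congr rfl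
        intro i _
        rw [gaussianReal_apply_eq_integral 0 one_ne_zero (s i), hg]
        congr 1
        rw [integral_indicator (hs i)]

instance (n : ℕ) : IsProbabilityMeasure (stdG n) := by
  rw [← stdG_eq_pi]
  infer_instance


lemma stdG_map_invariant (n : ℕ) (W : Matrix (Fin n) (Fin n) ℝ) (hW : Wᵀ * W = 1)
    {T : Set (Fin n → ℝ)} (hT : MeasurableSet T) :
    stdG n ((fun x => W *ᵥ x) ⁻¹' T) = stdG n T := by
  have hL : Measurable (fun x : Fin n → ℝ => W *ᵥ x) := by
    apply measurable_pi_lambda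
    intro i
    simp only [Matrix.mulVec, dotProduct]
    apply Finset.measurable_sum
    intro j _
    exact (measurable_pi_apply j).const_mul _
  have hdet1 : det W * det W = 1 := by
    have := congrArg det hW
    rwa [det_mul, det_transpose, det_one] at this
  have hdet : det W ≠ 0 := by
    intro h; rw [h] at hdet1; simp at hdet1
  have habs : |det W| = 1 := by
    rcases mul_self_eq_one_iff.mp hdet1 with h | h <;> simp [h]
  have hvol : Measure.map (fun x : Fin n → ℝ => W *ᵥ x) volume = volume := by
    have h1 : (fun x : Fin n → ℝ => W *ᵥ x) = ⇑(Matrix.toLin' W) := by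
      funext x; rw [Matrix.toLin'_apply]
    rw [h1, Real.map_matrix_volume_pi_eq_smul_volume_pi hdet, abs_inv, habs]
    simp
  have hsum : ∀ x : Fin n → ℝ, ∑ i, ((W *ᵥ x) i)^2 = ∑ i, (x i)^2 := by
    intro x
    have h1 : ∀ y : Fin n → ℝ, ∑ i, (y i)^2 = y ⬝ᵥ y := by
      intro y; simp [dotProduct, sq]
    rw [h1, h1]
    calc (W *ᵥ x) ⬝ᵥ (W *ᵥ x) = ((W *ᵥ x) ᵥ* W) ⬝ᵥ x := Matrix.dotProduct_mulVec _ _ _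
      _ = (Wᵀ *ᵥ (W *ᵥ x)) ⬝ᵥ x := by rw [← Matrix.mulVec_transpose]
      _ = ((Wᵀ * W) *ᵥ x) ⬝ᵥ x := by rw [Matrix.mulVec_mulVec]
      _ = x ⬝ᵥ x := by rw [hW, Matrix.one_mulVec]
  have hpdf : ∀ x : Fin n → ℝ, (stdPdf n (W *ᵥ x) : ENNReal) = (stdPdf n x : ENNReal) := by
    intro x; rw [stdPdf_coe', stdPdf_coe', hsum x]
  have hmeasInd : Measurable (Set.indicator T (fun y : Fin n → ℝ => (stdPdf n y : ENNReal))) :=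
    ((measurable_stdPdf n).coe_nnreal_ennreal).indicator hT
  rw [stdG, withDensity_apply _ (hL hT), withDensity_apply _ hT,
      ← lintegral_indicator (hL hT), ← lintegral_indicator hT]
  calc ∫⁻ x, Set.indicator ((fun x => W *ᵥ x) ⁻¹' T) (fun x => (stdPdf n x : ENNReal)) x
      = ∫⁻ x, Set.indicator T (fun y => (stdPdf n y : ENNReal)) (W *ᵥ x) := by
        apply lintegral_congr
        intro x
        classical
        rw [Set.indicator_apply, Set.indicator_apply]
        simp only [Set.mem_preimage]
        split_ifs with hx
        · exact (hpdf x).symm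
        · rfl
    _ = ∫⁻ y, Set.indicator T (fun y => (stdPdf n y : ENNReal)) y ∂(Measure.map (fun x : Fin n → ℝ => W *ᵥ x) volume) := by
        rw [lintegral_map hmeasInd hL]
    _ = ∫⁻ y, Set.indicator T (fun y => (stdPdf n y : ENNReal)) y := by rw [hvol]

noncomputable def M1 (a : ℝ) : ℝ := Real.exp (-a) * (Real.sqrt (1-2*a))⁻¹

lemma M1_nonneg (a : ℝ) : 0 ≤ M1 a := by
  rw [M1]; positivity

lemma oneD (a : ℝ) (ha : a < 1/2) :
    Integrable (fun y => gaussianPDFReal 0 1 y * Real.exp (a*(y^2-1))) ∧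
    ∫ y : ℝ, gaussianPDFReal 0 1 y * Real.exp (a*(y^2-1)) = M1 a := by
  have hb : (0:ℝ) < 1/2 - a := by linarith
  have hfe : (fun y => gaussianPDFReal 0 1 y * Real.exp (a*(y^2-1)))
      = fun y => ((Real.sqrt (2*Real.pi))⁻¹ * Real.exp (-a)) * Real.exp (-(1/2-a)*y^2) := by
    funext y
    rw [gaussianPDFReal_zero_one, mul_assoc, ← Real.exp_add, mul_assoc, ← Real.exp_add]
    congr 2
    ring
  constructor
  · rw [hfe]
    exact (integrable_exp_neg_mul_sq hb).const_mul _
  · rw [hfe, MeasureTheory.integral_const_mul, integral_gaussian]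
    rw [M1]
    have hc : (Real.sqrt (2*Real.pi))⁻¹ * Real.sqrt (Real.pi/(1/2-a)) = (Real.sqrt (1-2*a))⁻¹ := by
      rw [← Real.sqrt_inv, ← Real.sqrt_mul (by positivity), ← Real.sqrt_inv]
      congr 1
      have hπ := Real.pi_pos
      have h1 : (1:ℝ) - 2*a ≠ 0 := by linarith
      have h2 : (1:ℝ)/2 - a ≠ 0 := by linarith
      have h3 : Real.pi ≠ 0 := Real.pi_ne_zero
      field_simp
    calc (Real.sqrt (2*Real.pi))⁻¹ * Real.exp (-a) * Real.sqrt (Real.pi/(1/2-a))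
        = Real.exp (-a) * ((Real.sqrt (2*Real.pi))⁻¹ * Real.sqrt (Real.pi/(1/2-a))) := by ring
      _ = Real.exp (-a) * (Real.sqrt (1-2*a))⁻¹ := by rw [hc]

lemma tail_bound (n : ℕ) (a : Fin n → ℝ) (ha : ∀ i, a i < 1/2) (w : ℝ) :
    stdG n {y | w ≤ ∑ i, a i * ((y i)^2 - 1)}
      ≤ ENNReal.ofReal (Real.exp (-w) * ∏ i, M1 (a i)) := by
  set X : (Fin n → ℝ) → ℝ := fun y => ∑ i, a i * ((y i)^2 - 1) with hX
  set h : Fin n → ℝ → ℝ := fun i y => gaussianPDFReal 0 1 y * Real.exp (a i * (y^2-1)) with hh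
  have hsmul : (fun x : Fin n → ℝ => stdPdf n x • Real.exp (1 * X x)) = fun x => ∏ i, h i (x i) := by
    funext x
    have hcoe : (stdPdf n x : ℝ) = ∏ i, gaussianPDFReal 0 1 (x i) := by
      rw [stdPdf]
      push_cast
      exact Finset.prod_congr rfl fun i _ => Real.coe_toNNReal _ (gaussianPDFReal_nonneg 0 1 (x i))
    rw [NNReal.smul_def, hcoe, smul_eq_mul, one_mul, hX, Real.exp_sum, ← Finset.prod_mul_distrib]
  have hprodInt : Integrable (fun x : Fin n → ℝ => ∏ i, h i (x i)) :=
    Integrable.fintype_prod (fun i => (oneD (a i) (ha i)).1)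
  have hInt : Integrable (fun y => Real.exp (1 * X y)) (stdG n) := by
    rw [stdG, integrable_withDensity_iff_integrable_smul (measurable_stdPdf n)]
    rw [hsmul]
    exact hprodInt
  have hmgf : mgf X (stdG n) 1 = ∏ i, M1 (a i) := by
    rw [mgf, stdG, integral_withDensity_eq_integral_smul (measurable_stdPdf n), hsmul,
      integral_fintype_prod_volume_eq_prod]
    exact Finset.prod_congr rfl (fun i _ => (oneD (a i) (ha i)).2)
  have hcher := measure_ge_le_exp_mul_mgf (X := X) (μ := stdG n) w (zero_le_one) hInt
  rw [hmgf] at hcher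
  have hne : stdG n {y | w ≤ X y} ≠ ⊤ := measure_ne_top _ _
  calc stdG n {y | w ≤ X y}
      = ENNReal.ofReal ((stdG n {y | w ≤ X y}).toReal) := (ENNReal.ofReal_toReal hne).symm
    _ ≤ ENNReal.ofReal (Real.exp (-w) * ∏ i, M1 (a i)) := by
        apply ENNReal.ofReal_le_ofReal
        simpa [measureReal_def] using hcher


lemma M1_mono {a b : ℝ} (ha1 : 2*a < 1) (hb1 : 2*b < 1) (hprod : 0 ≤ (2*a)*((2*b)-(2*a))) :
    M1 a ≤ M1 b := by
  have h := factor_le (α := 2*a) (β := 2*b) (by linarith) (by linarith) hprod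
  have e1 : -(2*a)/2 = -a := by ring
  have e2 : -(2*b)/2 = -b := by ring
  rw [e1, e2] at h
  simpa [M1] using h

lemma M1_pos {a : ℝ} (h : 2*a < 1) : 0 < M1 a := by
  have h1 : (0:ℝ) < 1-2*a := by linarith
  rw [M1]
  positivity

lemma log_M1 {a : ℝ} (h : 2*a < 1) : Real.log (M1 a) = -a - Real.log (1-2*a)/2 := by
  have h1 : (0:ℝ) < 1-2*a := by linarith
  rw [M1, Real.log_mul (Real.exp_ne_zero _) (by positivity), Real.log_exp, Real.log_inv,
    Real.log_sqrt h1.le]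
  ring

lemma rate_bound {dn : ℕ} {σ u x s t : ℝ} (hdn : 1 ≤ dn) (hσ : 0 < σ) (hu : 0 < u) (hx : 0 < x)
    (hxd : Real.sqrt 2 * x = dn * σ) (hs : s = u/(x+u)) (ht : t = s/σ) :
    Real.exp (-(t*u)) * (M1 (s/2))^dn ≤ Real.exp (-((dn:ℝ)/2) * (u/x - Real.log ((x+u)/x)))
    ∧ Real.exp (-(t*u)) * (M1 (-(s/2)))^dn ≤ Real.exp (-((dn:ℝ)/2) * (u/x - Real.log ((x+u)/x))) := by
  have hA : (0:ℝ) < x + u := by linarith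
  have hs0 : 0 < s := by rw [hs]; positivity
  have hs1 : s < 1 := by rw [hs, div_lt_one hA]; linarith
  have h1s : (0:ℝ) < 1 - s := by linarith
  have hsqrt2 : Real.sqrt 2 ≤ 2 := by
    nlinarith [Real.sq_sqrt (show (0:ℝ) ≤ 2 by norm_num), Real.sqrt_nonneg 2]
  have h2x : (dn:ℝ)*σ ≤ 2*x := by rw [← hxd]; nlinarith
  have key : ((dn:ℝ)/2) * (u/x) ≤ t*u + (dn:ℝ)*s/2 := by
    have hexpand : t*u + (dn:ℝ)*s/2 - ((dn:ℝ)/2)*(u/x)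
        = u^2*(2*x - (dn:ℝ)*σ) / (2*σ*x*(x+u)) := by
      rw [ht, hs]
      field_simp
      ring
    have hnn : 0 ≤ u^2*(2*x - (dn:ℝ)*σ) / (2*σ*x*(x+u)) := by
      apply div_nonneg
      · nlinarith [sq_nonneg u]
      · positivity
    linarith
  have hlog1 : Real.log (1 - s) = - Real.log ((x+u)/x) := by
    have h0 : 1 - s = x/(x+u) := by rw [hs]; field_simp; ring
    rw [h0, Real.log_div hx.ne' hA.ne', Real.log_div hA.ne' hx.ne']
    ring
  constructor
  · have hpos := M1_pos (show 2*(s/2) < 1 by linarith)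
    rw [← Real.exp_log hpos, ← Real.exp_nat_mul, ← Real.exp_add, Real.exp_le_exp,
      log_M1 (show 2*(s/2) < 1 by linarith),
      show (1:ℝ)-2*(s/2) = 1-s from by ring, hlog1]
    have hd2 : (0:ℝ) ≤ (dn:ℝ) := by positivity
    nlinarith [key]
  · have hpos := M1_pos (show 2*(-(s/2)) < 1 by linarith)
    rw [← Real.exp_log hpos, ← Real.exp_nat_mul, ← Real.exp_add, Real.exp_le_exp,
      log_M1 (show 2*(-(s/2)) < 1 by linarith),
      show (1:ℝ)-2*(-(s/2)) = 1+s from by ring]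
    have haux := two_mul_le_log_div hs0.le hs1
    rw [hlog1] at haux
    have hd2 : (0:ℝ) ≤ (dn:ℝ) := by positivity
    nlinarith [key, mul_le_mul_of_nonneg_left haux hd2]

lemma spectral_real {n : ℕ} (B : Matrix (Fin n) (Fin n) ℝ) (hB : B.IsHermitian) :
    B = (hB.eigenvectorUnitary : Matrix (Fin n) (Fin n) ℝ) * Matrix.diagonal hB.eigenvalues *
      star (hB.eigenvectorUnitary : Matrix (Fin n) (Fin n) ℝ) := by
  have h := hB.spectral_theorem
  rwa [RCLike.ofReal_real_eq_id, Function.id_comp] at h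

lemma quad_diag {n : ℕ} (B : Matrix (Fin n) (Fin n) ℝ) (hB : B.IsHermitian) (x : Fin n → ℝ) :
    x ⬝ᵥ (B *ᵥ x) = ∑ i, hB.eigenvalues i *
      (((star (hB.eigenvectorUnitary : Matrix (Fin n) (Fin n) ℝ)) *ᵥ x) i)^2 := by
  set U : Matrix (Fin n) (Fin n) ℝ := (hB.eigenvectorUnitary : Matrix (Fin n) (Fin n) ℝ) with hU
  conv_lhs => rw [spectral_real B hB]
  rw [← Matrix.mulVec_mulVec, ← Matrix.mulVec_mulVec, Matrix.dotProduct_mulVec]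
  have hxU : x ᵥ* U = (star U) *ᵥ x := by
    rw [Matrix.star_eq_conjTranspose, Matrix.conjTranspose_eq_transpose_of_trivial,
      Matrix.mulVec_transpose]
  rw [hxU, dotProduct]
  apply Finset.sum_congr rfl
  intro i _
  rw [Matrix.mulVec_diagonal]
  ring

lemma eig_of_pair {n : ℕ} (B : Matrix (Fin n) (Fin n) ℝ) (hB : B.IsHermitian)
    {μ : ℝ} {w : Fin n → ℝ} (hw : w ≠ 0) (hBw : B *ᵥ w = μ • w) :
    ∃ j, hB.eigenvalues j = μ := by
  classical
  set U : Matrix (Fin n) (Fin n) ℝ := (hB.eigenvectorUnitary : Matrix (Fin n) (Fin n) ℝ) with hU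
  have hU1 : star U * U = 1 := Matrix.mem_unitaryGroup_iff'.mp (hB.eigenvectorUnitary).2
  have hU2 : U * star U = 1 := Matrix.mem_unitaryGroup_iff.mp (hB.eigenvectorUnitary).2
  set z := (star U) *ᵥ w with hz
  have hz0 : z ≠ 0 := by
    intro h
    apply hw
    have hWz : U *ᵥ z = w := by rw [hz, Matrix.mulVec_mulVec, hU2, Matrix.one_mulVec]
    rw [← hWz, h, Matrix.mulVec_zero]
  have hDz : (Matrix.diagonal hB.eigenvalues) *ᵥ z = μ • z := by
    have h1 : (star U) *ᵥ (B *ᵥ w) = (Matrix.diagonal hB.eigenvalues) *ᵥ z := by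
      rw [Matrix.mulVec_mulVec, hz, Matrix.mulVec_mulVec]
      congr 1
      conv_lhs => rw [spectral_real B hB, ← hU]
      rw [← Matrix.mul_assoc, ← Matrix.mul_assoc, hU1, Matrix.one_mul]
    have h2 : (star U) *ᵥ (μ • w) = μ • z := by rw [Matrix.mulVec_smul, hz]
    rw [hBw, h2] at h1
    exact h1.symm
  obtain ⟨j, hj⟩ := Function.ne_iff.mp hz0
  refine ⟨j, ?_⟩
  have hcf := congrFun hDz j
  rw [Matrix.mulVec_diagonal] at hcf
  have hzj : z j ≠ 0 := hj
  have : hB.eigenvalues j * z j = μ * z j := by simpa using hcf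
  exact mul_right_cancel₀ hzj this

lemma sum_eig {n : ℕ} (B : Matrix (Fin n) (Fin n) ℝ) (hB : B.IsHermitian) :
    ∑ i, hB.eigenvalues i = B.trace := by
  have hU1 : star (hB.eigenvectorUnitary : Matrix (Fin n) (Fin n) ℝ) *
      (hB.eigenvectorUnitary : Matrix (Fin n) (Fin n) ℝ) = 1 :=
    Matrix.mem_unitaryGroup_iff'.mp (hB.eigenvectorUnitary).2
  conv_rhs => rw [spectral_real B hB]
  rw [Matrix.trace_mul_comm, ← Matrix.mul_assoc, hU1, Matrix.one_mul, Matrix.trace_diagonal]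


set_option maxHeartbeats 2000000 in
/-- Deviation bound for nilpotent traceless Gaussian quadratic forms: for `v` a vector of
`d ≥ 1` i.i.d. standard normals and `A` a (not necessarily symmetric) `d × d` real matrix
with `tr A = 0` and `A * A = 0`, if the largest eigenvalue `lamSym` of `A + Aᵀ` is positive
then `P(|v'Av| ≥ ε) ≤ 4 exp(-(d/2) G(d √(λ_d(AᵀA)/2), ε/2))` where `lamATA` is the largest
eigenvalue of `AᵀA`, and if `lamSym = 0` then this probability is zero. -/
theorem nilpotent_traceless_gaussian_quadratic_form (d : ℕ) (hd : 1 ≤ d)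
    {Ω : Type*} [MeasurableSpace Ω] (P : Measure Ω) [IsProbabilityMeasure P]
    (v : Ω → Fin d → ℝ)
    (hmeas : ∀ i, Measurable fun ω => v ω i)
    (hIndep : iIndepFun (fun i ω => v ω i) P)
    (hlaw : ∀ i, P.map (fun ω => v ω i) = gaussianReal 0 1)
    (A : Matrix (Fin d) (Fin d) ℝ) (htr : A.trace = 0) (hAA : A * A = 0)
    (hSym : (A + Aᵀ).IsHermitian) (hATA : (Aᵀ * A).IsHermitian)
    (lamSym lamATA : ℝ)
    (hlamSym : lamSym = ⨆ i, hSym.eigenvalues i)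
    (hlamATA : lamATA = ⨆ i, hATA.eigenvalues i)
    (ε : ℝ) (hε : 0 < ε) :
    (0 < lamSym → P {ω | ε ≤ |v ω ⬝ᵥ (A *ᵥ v ω)|}
        ≤ ENNReal.ofReal (4 * Real.exp (- ((d : ℝ) / 2) *
            G ((d : ℝ) * Real.sqrt (lamATA / 2)) (ε / 2)))) ∧
    (lamSym = 0 → P {ω | ε ≤ |v ω ⬝ᵥ (A *ᵥ v ω)|} = 0) := by
  classical
  have hNe : Nonempty (Fin d) := Fin.pos_iff_nonempty.mp hd
  have hquad : ∀ x : Fin d → ℝ, 2 * (x ⬝ᵥ (A *ᵥ x)) = ∑ i, hSym.eigenvalues i *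
      (((star (hSym.eigenvectorUnitary : Matrix (Fin d) (Fin d) ℝ)) *ᵥ x) i)^2 := by
    intro x
    rw [← quad_diag (A + Aᵀ) hSym x, Matrix.add_mulVec, dotProduct_add]
    have h1 : x ⬝ᵥ (Aᵀ *ᵥ x) = x ⬝ᵥ (A *ᵥ x) := by
      rw [Matrix.mulVec_transpose, Matrix.dotProduct_mulVec]
      exact dotProduct_comm _ _
    rw [h1]; ring
  have hsume : ∑ i, hSym.eigenvalues i = 0 := by
    rw [sum_eig (A + Aᵀ) hSym, Matrix.trace_add, Matrix.trace_transpose, htr, add_zero]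
  have hbdd : BddAbove (Set.range hSym.eigenvalues) := Set.Finite.bddAbove (Set.finite_range _)
  have hle : ∀ i, hSym.eigenvalues i ≤ lamSym := fun i => by
    rw [hlamSym]; exact le_ciSup hbdd i
  have hbddA : BddAbove (Set.range hATA.eigenvalues) := Set.Finite.bddAbove (Set.finite_range _)
  have hleA : ∀ j, hATA.eigenvalues j ≤ lamATA := fun j => by
    rw [hlamATA]; exact le_ciSup hbddA j
  have hAA2 : ∀ zv : Fin d → ℝ, A *ᵥ (A *ᵥ zv) = 0 := by
    intro zv; rw [Matrix.mulVec_mulVec, hAA, Matrix.zero_mulVec]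
  have hAT0 : Aᵀ * Aᵀ = 0 := by rw [← Matrix.transpose_mul, hAA, Matrix.transpose_zero]
  have hAAT2 : ∀ zv : Fin d → ℝ, Aᵀ *ᵥ (Aᵀ *ᵥ zv) = 0 := by
    intro zv; rw [Matrix.mulVec_mulVec, hAT0, Matrix.zero_mulVec]
  have hbound : ∀ i, hSym.eigenvalues i ≠ 0 → (hSym.eigenvalues i)^2 ≤ lamATA := by
    intro i hne
    set μ : ℝ := hSym.eigenvalues i with hμ
    set uv : Fin d → ℝ := ⇑(hSym.eigenvectorBasis i) with huv
    have huvec : (A + Aᵀ) *ᵥ uv = μ • uv := hSym.mulVec_eigenvectorBasis i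
    have hu0 : uv ≠ 0 := by
      intro h0
      have hnorm := hSym.eigenvectorBasis.orthonormal.1 i
      have hz : hSym.eigenvectorBasis i = 0 := by
        apply PiLp.ext
        intro j
        exact congrFun h0 j
      rw [hz] at hnorm
      simp at hnorm
    have hsplit : A *ᵥ uv + Aᵀ *ᵥ uv = μ • uv := by
      rw [← Matrix.add_mulVec]; exact huvec
    set w : Fin d → ℝ := Aᵀ *ᵥ uv with hwdef
    have hw0 : w ≠ 0 := by
      intro h0
      rw [h0, add_zero] at hsplit
      have h2 : A *ᵥ (A *ᵥ uv) = 0 := hAA2 uv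
      rw [hsplit, Matrix.mulVec_smul, hsplit, smul_smul] at h2
      rcases smul_eq_zero.mp h2 with h | h
      · exact hne (mul_self_eq_zero.mp h)
      · exact hu0 h
    have hAw : A *ᵥ w = μ • (A *ᵥ uv) := by
      have hww : w = μ • uv - A *ᵥ uv := by rw [← hsplit]; abel
      rw [hww, Matrix.mulVec_sub, Matrix.mulVec_smul, hAA2 uv, sub_zero]
    have hATAu : Aᵀ *ᵥ (A *ᵥ uv) = μ • w := by
      have h3 : A *ᵥ uv = μ • uv - w := by rw [← hsplit]; abel
      rw [h3, Matrix.mulVec_sub, Matrix.mulVec_smul, hwdef, hAAT2 uv, sub_zero]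
    have hNw : (Aᵀ * A) *ᵥ w = (μ^2) • w := by
      calc (Aᵀ * A) *ᵥ w = Aᵀ *ᵥ (A *ᵥ w) := (Matrix.mulVec_mulVec _ _ _).symm
        _ = Aᵀ *ᵥ (μ • (A *ᵥ uv)) := by rw [hAw]
        _ = μ • (Aᵀ *ᵥ (A *ᵥ uv)) := Matrix.mulVec_smul _ _ _
        _ = μ • (μ • w) := by rw [hATAu]
        _ = (μ^2) • w := by rw [smul_smul, sq]
    obtain ⟨j, hj⟩ := eig_of_pair (Aᵀ * A) hATA hw0 hNw
    calc μ^2 = hATA.eigenvalues j := hj.symm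
      _ ≤ lamATA := hleA j
  constructor
  · -- main bound
    intro hpos
    have hv : Measurable v := measurable_pi_lambda v hmeas
    have hQmeas : Measurable fun x : Fin d → ℝ => x ⬝ᵥ (A *ᵥ x) := by
      simp only [dotProduct, Matrix.mulVec]
      exact Finset.measurable_sum _ fun i _ =>
        (measurable_pi_apply i).mul (Finset.measurable_sum _ fun j _ =>
          (measurable_pi_apply j).const_mul _)
    have hsetmeas : MeasurableSet {x : Fin d → ℝ | ε ≤ |x ⬝ᵥ (A *ᵥ x)|} :=
      measurableSet_le measurable_const hQmeas.abs
    have hmap : P.map v = stdG d := by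
      rw [← stdG_eq_pi]
      refine (Measure.pi_eq fun s hs => ?_).symm
      rw [Measure.map_apply hv (MeasurableSet.univ_pi hs)]
      have hpre : v ⁻¹' (Set.pi Set.univ s) = ⋂ i, (fun ω => v ω i) ⁻¹' (s i) := by
        ext ω; simp [Set.mem_pi]
      rw [hpre]
      have h1 := hIndep.measure_inter_preimage_eq_mul Finset.univ (fun i _ => hs i)
      rw [show (⋂ i ∈ Finset.univ, (fun ω => v ω i) ⁻¹' (s i))
          = ⋂ i, (fun ω => v ω i) ⁻¹' (s i) from by simp] at h1
      rw [h1]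
      exact Finset.prod_congr rfl fun i _ => by
        rw [← hlaw i, Measure.map_apply (hmeas i) (hs i)]
    obtain ⟨i0, hi0⟩ : ∃ i, 0 < hSym.eigenvalues i := by
      by_contra h
      push_neg at h
      have : lamSym ≤ 0 := by rw [hlamSym]; exact ciSup_le fun i => h i
      linarith
    have hlamATApos : 0 < lamATA := by
      have := hbound i0 (ne_of_gt hi0)
      nlinarith
    have hσ : 0 < Real.sqrt lamATA := Real.sqrt_pos.mpr hlamATApos
    have habs2 : ∀ i, |hSym.eigenvalues i| ≤ Real.sqrt lamATA := by
      intro i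
      by_cases h : hSym.eigenvalues i = 0
      · rw [h]; simp [hσ.le]
      · rw [← Real.sqrt_sq_eq_abs]
        exact Real.sqrt_le_sqrt (hbound i h)
    set u0 : ℝ := ε/2 with hu0def
    have hu0 : 0 < u0 := by rw [hu0def]; linarith
    set x0 : ℝ := (d:ℝ) * Real.sqrt (lamATA/2) with hx0def
    have hdpos : (0:ℝ) < (d:ℝ) := by exact_mod_cast hd
    have hx0 : 0 < x0 := by
      rw [hx0def]
      exact mul_pos hdpos (Real.sqrt_pos.mpr (by linarith))
    have hxd : Real.sqrt 2 * x0 = (d:ℝ) * Real.sqrt lamATA := by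
      rw [hx0def, show Real.sqrt 2 * ((d:ℝ) * Real.sqrt (lamATA/2))
          = (d:ℝ) * (Real.sqrt 2 * Real.sqrt (lamATA/2)) from by ring,
        ← Real.sqrt_mul (by norm_num : (0:ℝ) ≤ 2),
        show 2*(lamATA/2) = lamATA from by ring]
    set s0 : ℝ := u0/(x0+u0) with hs0def
    set t0 : ℝ := s0/(Real.sqrt lamATA) with ht0def
    have hAx : 0 < x0 + u0 := by linarith
    have hs0pos : 0 < s0 := by rw [hs0def]; positivity
    have hs0lt : s0 < 1 := by rw [hs0def, div_lt_one hAx]; linarith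
    have ht0pos : 0 < t0 := by rw [ht0def]; positivity
    have hts : t0 * Real.sqrt lamATA = s0 := by
      rw [ht0def]; field_simp
    obtain ⟨hrateU, hrateL⟩ := rate_bound (dn := d) hd hσ hu0 hx0 hxd hs0def ht0def
    -- tail estimates
    have htailU : ∀ (c : Fin d → ℝ), (∀ i, 0 ≤ c i) → (∀ i, c i ≤ Real.sqrt lamATA / 2) →
        stdG d {y | u0 ≤ ∑ i, c i * ((y i)^2 - 1)}
          ≤ ENNReal.ofReal (Real.exp (-((d:ℝ)/2) * (u0/x0 - Real.log ((x0+u0)/x0)))) := by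
      intro c hc0 hcσ
      have hc2 : ∀ i, t0 * c i ≤ s0/2 := by
        intro i
        have h1 : t0 * c i ≤ t0 * (Real.sqrt lamATA/2) :=
          mul_le_mul_of_nonneg_left (hcσ i) ht0pos.le
        have h2 : t0 * (Real.sqrt lamATA/2) = s0/2 := by rw [← hts]; ring
        linarith
      have hbw : ∀ i, t0 * c i < 1/2 := fun i => by linarith [hc2 i, hs0lt]
      have hset : {y : Fin d → ℝ | u0 ≤ ∑ i, c i * ((y i)^2 - 1)}
          = {y | t0*u0 ≤ ∑ i, (t0 * c i) * ((y i)^2 - 1)} := by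
        ext y
        simp only [Set.mem_setOf_eq]
        rw [show ∑ i, (t0 * c i) * ((y i)^2 - 1) = t0 * ∑ i, c i * ((y i)^2-1) from by
          rw [Finset.mul_sum]; exact Finset.sum_congr rfl fun i _ => by ring]
        exact (mul_le_mul_iff_of_pos_left ht0pos).symm
      rw [hset]
      refine le_trans (tail_bound d (fun i => t0 * c i) hbw (t0*u0)) ?_
      apply ENNReal.ofReal_le_ofReal
      have hpow : (M1 (s0/2))^d = ∏ _i : Fin d, M1 (s0/2) := by
        rw [Finset.prod_const, Finset.card_univ, Fintype.card_fin]
      have hprod : ∏ i, M1 (t0 * c i) ≤ (M1 (s0/2))^d := by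
        rw [hpow]
        refine Finset.prod_le_prod (fun i _ => M1_nonneg _) (fun i _ => ?_)
        apply M1_mono
        · linarith [hbw i]
        · linarith [hs0lt]
        · have ha0 : 0 ≤ t0 * c i := mul_nonneg ht0pos.le (hc0 i)
          nlinarith [hc2 i]
      calc Real.exp (-(t0*u0)) * ∏ i, M1 (t0*c i)
          ≤ Real.exp (-(t0*u0)) * (M1 (s0/2))^d :=
            mul_le_mul_of_nonneg_left hprod (Real.exp_pos _).le
        _ ≤ _ := hrateU
    have htailL : ∀ (c : Fin d → ℝ), (∀ i, 0 ≤ c i) → (∀ i, c i ≤ Real.sqrt lamATA / 2) →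
        stdG d {y | u0 ≤ ∑ i, (-(c i)) * ((y i)^2 - 1)}
          ≤ ENNReal.ofReal (Real.exp (-((d:ℝ)/2) * (u0/x0 - Real.log ((x0+u0)/x0)))) := by
      intro c hc0 hcσ
      have hc2 : ∀ i, t0 * c i ≤ s0/2 := by
        intro i
        have h1 : t0 * c i ≤ t0 * (Real.sqrt lamATA/2) :=
          mul_le_mul_of_nonneg_left (hcσ i) ht0pos.le
        have h2 : t0 * (Real.sqrt lamATA/2) = s0/2 := by rw [← hts]; ring
        linarith
      have hbw : ∀ i, t0 * (-(c i)) < 1/2 := by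
        intro i
        have ha0 : 0 ≤ t0 * c i := mul_nonneg ht0pos.le (hc0 i)
        nlinarith
      have hset : {y : Fin d → ℝ | u0 ≤ ∑ i, (-(c i)) * ((y i)^2 - 1)}
          = {y | t0*u0 ≤ ∑ i, (t0 * (-(c i))) * ((y i)^2 - 1)} := by
        ext y
        simp only [Set.mem_setOf_eq]
        rw [show ∑ i, (t0 * (-(c i))) * ((y i)^2 - 1) = t0 * ∑ i, (-(c i)) * ((y i)^2-1) from by
          rw [Finset.mul_sum]; exact Finset.sum_congr rfl fun i _ => by ring]
        exact (mul_le_mul_iff_of_pos_left ht0pos).symm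
      rw [hset]
      refine le_trans (tail_bound d (fun i => t0 * (-(c i))) hbw (t0*u0)) ?_
      apply ENNReal.ofReal_le_ofReal
      have hpow : (M1 (-(s0/2)))^d = ∏ _i : Fin d, M1 (-(s0/2)) := by
        rw [Finset.prod_const, Finset.card_univ, Fintype.card_fin]
      have hprod : ∏ i, M1 (t0 * (-(c i))) ≤ (M1 (-(s0/2)))^d := by
        rw [hpow]
        refine Finset.prod_le_prod (fun i _ => M1_nonneg _) (fun i _ => ?_)
        apply M1_mono
        · have ha0 : 0 ≤ t0 * c i := mul_nonneg ht0pos.le (hc0 i)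
          nlinarith
        · linarith [hs0pos]
        · have ha0 : 0 ≤ t0 * c i := mul_nonneg ht0pos.le (hc0 i)
          nlinarith [hc2 i]
      calc Real.exp (-(t0*u0)) * ∏ i, M1 (t0*(-(c i)))
          ≤ Real.exp (-(t0*u0)) * (M1 (-(s0/2)))^d :=
            mul_le_mul_of_nonneg_left hprod (Real.exp_pos _).le
        _ ≤ _ := hrateL
    -- weights
    set cp : Fin d → ℝ := fun i => max (hSym.eigenvalues i) 0 / 2 with hcp
    set cm : Fin d → ℝ := fun i => max (-(hSym.eigenvalues i)) 0 / 2 with hcm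
    have hcp0 : ∀ i, 0 ≤ cp i := fun i => by
      simp only [hcp]; exact div_nonneg (le_max_right _ _) (by norm_num)
    have hcm0 : ∀ i, 0 ≤ cm i := fun i => by
      simp only [hcm]; exact div_nonneg (le_max_right _ _) (by norm_num)
    have hcpσ : ∀ i, cp i ≤ Real.sqrt lamATA / 2 := by
      intro i
      simp only [hcp]
      have : max (hSym.eigenvalues i) 0 ≤ Real.sqrt lamATA :=
        max_le ((le_abs_self _).trans (habs2 i)) hσ.le
      linarith
    have hcmσ : ∀ i, cm i ≤ Real.sqrt lamATA / 2 := by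
      intro i
      simp only [hcm]
      have : max (-(hSym.eigenvalues i)) 0 ≤ Real.sqrt lamATA :=
        max_le ((neg_le_abs _).trans (habs2 i)) hσ.le
      linarith
    have hdiff : ∀ i, cp i - cm i = hSym.eigenvalues i / 2 := by
      intro i
      simp only [hcp, hcm]
      rcases le_total 0 (hSym.eigenvalues i) with h | h
      · rw [max_eq_left h, max_eq_right (by linarith : -(hSym.eigenvalues i) ≤ 0)]; ring
      · rw [max_eq_right h, max_eq_left (by linarith : 0 ≤ -(hSym.eigenvalues i))]; ring
    -- event manipulation
    have hU2 : (hSym.eigenvectorUnitary : Matrix (Fin d) (Fin d) ℝ) *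
        star (hSym.eigenvectorUnitary : Matrix (Fin d) (Fin d) ℝ) = 1 :=
      Matrix.mem_unitaryGroup_iff.mp (hSym.eigenvectorUnitary).2
    have hWT : (star (hSym.eigenvectorUnitary : Matrix (Fin d) (Fin d) ℝ))ᵀ *
        (star (hSym.eigenvectorUnitary : Matrix (Fin d) (Fin d) ℝ)) = 1 := by
      rw [Matrix.star_eq_conjTranspose, Matrix.conjTranspose_eq_transpose_of_trivial,
        Matrix.transpose_transpose]
      rwa [Matrix.star_eq_conjTranspose, Matrix.conjTranspose_eq_transpose_of_trivial] at hU2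
    set T0 : Set (Fin d → ℝ) := {y | ε ≤ |∑ i, (hSym.eigenvalues i/2) * (y i)^2|} with hT0
    have hT0meas : MeasurableSet T0 := by
      rw [hT0]
      refine measurableSet_le measurable_const (Measurable.abs ?_)
      exact Finset.measurable_sum _ fun i _ =>
        ((measurable_pi_apply i).pow_const 2).const_mul _
    have hhalf : ∀ x : Fin d → ℝ, x ⬝ᵥ (A *ᵥ x) = ∑ i, (hSym.eigenvalues i / 2) *
        (((star (hSym.eigenvectorUnitary : Matrix (Fin d) (Fin d) ℝ)) *ᵥ x) i)^2 := by
      intro x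
      have h2 := hquad x
      have h3 : ∑ i, (hSym.eigenvalues i/2) *
          (((star (hSym.eigenvectorUnitary : Matrix (Fin d) (Fin d) ℝ)) *ᵥ x) i)^2
          = (∑ i, hSym.eigenvalues i *
          (((star (hSym.eigenvectorUnitary : Matrix (Fin d) (Fin d) ℝ)) *ᵥ x) i)^2)/2 := by
        rw [Finset.sum_div]
        exact Finset.sum_congr rfl fun i _ => by ring
      rw [h3, ← h2]; ring
    have hEv : {x : Fin d → ℝ | ε ≤ |x ⬝ᵥ (A *ᵥ x)|} =
        (fun x => (star (hSym.eigenvectorUnitary : Matrix (Fin d) (Fin d) ℝ)) *ᵥ x) ⁻¹' T0 := by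
      ext x
      rw [Set.mem_preimage, hT0, Set.mem_setOf_eq, Set.mem_setOf_eq, hhalf x]
    calc P {ω | ε ≤ |v ω ⬝ᵥ (A *ᵥ v ω)|}
        = (P.map v) {x | ε ≤ |x ⬝ᵥ (A *ᵥ x)|} := by
          rw [Measure.map_apply hv hsetmeas]; rfl
      _ = stdG d T0 := by
          rw [hmap, hEv, stdG_map_invariant d _ hWT hT0meas]
      _ ≤ ENNReal.ofReal (4 * Real.exp (- ((d : ℝ) / 2) * G x0 u0)) := by
          set S1 : Set (Fin d → ℝ) := {y | u0 ≤ ∑ i, cp i * ((y i)^2 - 1)} with hS1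
          set S2 : Set (Fin d → ℝ) := {y | u0 ≤ ∑ i, (-(cp i)) * ((y i)^2 - 1)} with hS2
          set S3 : Set (Fin d → ℝ) := {y | u0 ≤ ∑ i, cm i * ((y i)^2 - 1)} with hS3
          set S4 : Set (Fin d → ℝ) := {y | u0 ≤ ∑ i, (-(cm i)) * ((y i)^2 - 1)} with hS4
          have hsplity : ∀ y : Fin d → ℝ, ∑ i, (hSym.eigenvalues i/2) * (y i)^2
              = (∑ i, cp i * ((y i)^2 - 1)) - (∑ i, cm i * ((y i)^2 - 1)) := by
            intro y
            rw [← Finset.sum_sub_distrib]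
            have h4 : ∀ i ∈ Finset.univ, cp i * ((y i)^2 - 1) - cm i * ((y i)^2 - 1)
                = (hSym.eigenvalues i/2) * (y i)^2 - hSym.eigenvalues i/2 := by
              intro i _
              have h5 := hdiff i
              nlinarith [h5]
            rw [Finset.sum_congr rfl h4, Finset.sum_sub_distrib]
            have hz : ∑ i, hSym.eigenvalues i / 2 = 0 := by
              rw [← Finset.sum_div, hsume]; norm_num
            rw [hz, sub_zero]
          have hsub : T0 ⊆ (S1 ∪ S2) ∪ (S3 ∪ S4) := by
            intro y hy
            rw [hT0, Set.mem_setOf_eq, hsplity y] at hy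
            set a := ∑ i, cp i * ((y i)^2 - 1) with hadef
            set b := ∑ i, cm i * ((y i)^2 - 1) with hbdef
            have hng1 : ∑ i, (-(cp i)) * ((y i)^2 - 1) = -a := by
              rw [hadef, ← Finset.sum_neg_distrib]
              exact Finset.sum_congr rfl fun i _ => by ring
            have hng2 : ∑ i, (-(cm i)) * ((y i)^2 - 1) = -b := by
              rw [hbdef, ← Finset.sum_neg_distrib]
              exact Finset.sum_congr rfl fun i _ => by ring
            by_cases h1 : u0 ≤ |a|
            · left
              rcases le_abs.mp h1 with h | h
              · left; exact h
              · right; rw [hS2, Set.mem_setOf_eq, hng1]; exact h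
            · right
              push_neg at h1
              have h2 : u0 ≤ |b| := by
                have habsub : |a - b| ≤ |a| + |b| := abs_sub _ _
                have hεu : ε = 2*u0 := by rw [hu0def]; ring
                linarith
              rcases le_abs.mp h2 with h | h
              · left; exact h
              · right; rw [hS4, Set.mem_setOf_eq, hng2]; exact h
          have hb1 := htailU cp hcp0 hcpσ
          have hb2 := htailL cp hcp0 hcpσ
          have hb3 := htailU cm hcm0 hcmσ
          have hb4 := htailL cm hcm0 hcmσ
          have hGG : G x0 u0 = u0/x0 - Real.log ((x0+u0)/x0) := rfl
          have hE0 : 0 ≤ Real.exp (-((d:ℝ)/2) * (u0/x0 - Real.log ((x0+u0)/x0))) :=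
            (Real.exp_pos _).le
          calc stdG d T0 ≤ stdG d ((S1 ∪ S2) ∪ (S3 ∪ S4)) := measure_mono hsub
            _ ≤ stdG d (S1 ∪ S2) + stdG d (S3 ∪ S4) := measure_union_le _ _
            _ ≤ (stdG d S1 + stdG d S2) + (stdG d S3 + stdG d S4) :=
                add_le_add (measure_union_le _ _) (measure_union_le _ _)
            _ ≤ (ENNReal.ofReal (Real.exp (-((d:ℝ)/2) * (u0/x0 - Real.log ((x0+u0)/x0))))
                  + ENNReal.ofReal (Real.exp (-((d:ℝ)/2) * (u0/x0 - Real.log ((x0+u0)/x0)))))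
                + (ENNReal.ofReal (Real.exp (-((d:ℝ)/2) * (u0/x0 - Real.log ((x0+u0)/x0))))
                  + ENNReal.ofReal (Real.exp (-((d:ℝ)/2) * (u0/x0 - Real.log ((x0+u0)/x0))))) :=
                add_le_add (add_le_add hb1 hb2) (add_le_add hb3 hb4)
            _ = ENNReal.ofReal (4 * Real.exp (- ((d : ℝ) / 2) * G x0 u0)) := by
                have hE2 : (0:ℝ) ≤ Real.exp (-((d:ℝ)/2) * (u0/x0 - Real.log ((x0+u0)/x0)))
                    + Real.exp (-((d:ℝ)/2) * (u0/x0 - Real.log ((x0+u0)/x0))) := by linarith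
                rw [hGG, ← ENNReal.ofReal_add hE0 hE0, ← ENNReal.ofReal_add hE2 hE2]
                congr 1
                ring
  · -- zero case
    intro h0
    have hez : ∀ i, hSym.eigenvalues i = 0 := by
      have hnp : ∀ i ∈ Finset.univ, hSym.eigenvalues i ≤ 0 := fun i _ => by
        have := hle i; rw [h0] at this; exact this
      have hall := (Finset.sum_eq_zero_iff_of_nonpos hnp).mp hsume
      exact fun i => hall i (Finset.mem_univ i)
    have hzero : ∀ x : Fin d → ℝ, x ⬝ᵥ (A *ᵥ x) = 0 := by
      intro x
      have h2 := hquad x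
      simp only [hez, zero_mul, Finset.sum_const_zero] at h2
      linarith
    have hempty : {ω | ε ≤ |v ω ⬝ᵥ (A *ᵥ v ω)|} = ∅ := by
      apply Set.eq_empty_iff_forall_notMem.mpr
      intro ω hω
      rw [Set.mem_setOf_eq, hzero (v ω)] at hω
      rw [abs_zero] at hω
      linarith
    rw [hempty]
    exact measure_empty
end Stmt11
end

section
/- (Explicit deviation bound for nilpotent traceless Gaussian quadratic forms.) Let d ≥ 1 be an integer, let v be a random vector in ℝ^d with i.i.d. standard normal components, and let A be a (not necessarily symmetric) d×d real matrix with trace(A) = 0 and A·A = 0 (the zero matrix). For each ε > 0: if the largest eigenvalue of A + A' is positive, then P( |v'Av| ≥ ε ) ≤ 4·exp( − d·ε² / (4·d·√(2·λ_d(A'A))·(ε + d·√(2·λ_d(A'A)))) ), where λ_d(A'A) is the largest eigenvalue of A'A; and if the largest eigenvalue of A + A' is 0, then P( |v'Av| ≥ ε ) = 0. -/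
open Matrix MeasureTheory ProbabilityTheory Real
open scoped ENNReal NNReal

namespace Stmt12

lemma neg_log_le {x : ℝ} (hx : x ≤ 1/2) : -Real.log (1-x) ≤ x + 2*x^2 := by
  have h1 : (0:ℝ) < 1 - x := by linarith
  have h2 := Real.log_le_sub_one_of_pos (inv_pos.mpr h1)
  rw [Real.log_inv] at h2
  have h4 : (1-x)⁻¹ * (1-x) = 1 := inv_mul_cancel₀ h1.ne'
  nlinarith [sq_nonneg x, mul_pos h1 h1]

variable {d : ℕ}

lemma dot_tr (A : Matrix (Fin d) (Fin d) ℝ) (x y : Fin d → ℝ) :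
    x ⬝ᵥ (Aᵀ *ᵥ y) = (A *ᵥ x) ⬝ᵥ y := by
  rw [Matrix.dotProduct_mulVec, Matrix.vecMul_transpose]

lemma herm_add_tr (A : Matrix (Fin d) (Fin d) ℝ) : (A + Aᵀ).IsHermitian := by
  ext i j
  simp [Matrix.conjTranspose_apply, Matrix.add_apply, add_comm]

variable {M : Matrix (Fin d) (Fin d) ℝ} (hM : M.IsHermitian)

lemma star_W : star (hM.eigenvectorUnitary : Matrix (Fin d) (Fin d) ℝ)
    = (hM.eigenvectorUnitary : Matrix (Fin d) (Fin d) ℝ)ᵀ := by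
  ext i j
  simp [Matrix.star_apply]

lemma WtW : ((hM.eigenvectorUnitary : Matrix (Fin d) (Fin d) ℝ))ᵀ *
    (hM.eigenvectorUnitary : Matrix (Fin d) (Fin d) ℝ) = 1 := by
  rw [← star_W hM]
  exact Matrix.UnitaryGroup.star_mul_self _

lemma WWt : (hM.eigenvectorUnitary : Matrix (Fin d) (Fin d) ℝ) *
    ((hM.eigenvectorUnitary : Matrix (Fin d) (Fin d) ℝ))ᵀ = 1 := by
  rw [← star_W hM]
  exact hM.eigenvectorUnitary.2.2

lemma dot_W (y z : Fin d → ℝ) :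
    ((hM.eigenvectorUnitary : Matrix (Fin d) (Fin d) ℝ) *ᵥ y) ⬝ᵥ
      ((hM.eigenvectorUnitary : Matrix (Fin d) (Fin d) ℝ) *ᵥ z) = y ⬝ᵥ z := by
  rw [← dot_tr, Matrix.mulVec_mulVec, WtW hM, Matrix.one_mulVec]

lemma spectral_real : M = (hM.eigenvectorUnitary : Matrix (Fin d) (Fin d) ℝ) *
    Matrix.diagonal hM.eigenvalues * (hM.eigenvectorUnitary : Matrix (Fin d) (Fin d) ℝ)ᵀ := by
  rw [← star_W hM]
  have h := hM.spectral_theorem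
  simpa using h

lemma mulVec_eq (z : Fin d → ℝ) :
    M *ᵥ z = (hM.eigenvectorUnitary : Matrix (Fin d) (Fin d) ℝ) *ᵥ
      (Matrix.diagonal hM.eigenvalues *ᵥ
        ((hM.eigenvectorUnitary : Matrix (Fin d) (Fin d) ℝ)ᵀ *ᵥ z)) := by
  rw [Matrix.mulVec_mulVec, Matrix.mulVec_mulVec, ← spectral_real hM]

lemma quad_W (y : Fin d → ℝ) :
    ((hM.eigenvectorUnitary : Matrix (Fin d) (Fin d) ℝ) *ᵥ y) ⬝ᵥ
      (M *ᵥ ((hM.eigenvectorUnitary : Matrix (Fin d) (Fin d) ℝ) *ᵥ y))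
      = ∑ i, hM.eigenvalues i * (y i)^2 := by
  have h1 : (hM.eigenvectorUnitary : Matrix (Fin d) (Fin d) ℝ)ᵀ *ᵥ
      ((hM.eigenvectorUnitary : Matrix (Fin d) (Fin d) ℝ) *ᵥ y) = y := by
    rw [Matrix.mulVec_mulVec, WtW hM, Matrix.one_mulVec]
  rw [mulVec_eq hM, h1, dot_W hM]
  simp only [dotProduct, Matrix.mulVec_diagonal]
  exact Finset.sum_congr rfl fun i _ => by ring

lemma quad_diag (x : Fin d → ℝ) :
    x ⬝ᵥ (M *ᵥ x) = ∑ i, hM.eigenvalues i *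
      (((hM.eigenvectorUnitary : Matrix (Fin d) (Fin d) ℝ)ᵀ *ᵥ x) i)^2 := by
  have hx : (hM.eigenvectorUnitary : Matrix (Fin d) (Fin d) ℝ) *ᵥ
      ((hM.eigenvectorUnitary : Matrix (Fin d) (Fin d) ℝ)ᵀ *ᵥ x) = x := by
    rw [Matrix.mulVec_mulVec, WWt hM, Matrix.one_mulVec]
  conv_lhs => rw [← hx]
  exact quad_W hM _

lemma norm_sq_diag (x : Fin d → ℝ) :
    x ⬝ᵥ x = ∑ i, (((hM.eigenvectorUnitary : Matrix (Fin d) (Fin d) ℝ)ᵀ *ᵥ x) i)^2 := by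
  have hx : (hM.eigenvectorUnitary : Matrix (Fin d) (Fin d) ℝ) *ᵥ
      ((hM.eigenvectorUnitary : Matrix (Fin d) (Fin d) ℝ)ᵀ *ᵥ x) = x := by
    rw [Matrix.mulVec_mulVec, WWt hM, Matrix.one_mulVec]
  conv_lhs => rw [← hx]
  rw [dot_W hM]
  simp only [dotProduct]
  exact Finset.sum_congr rfl fun i _ =>
    (sq (((hM.eigenvectorUnitary : Matrix (Fin d) (Fin d) ℝ)ᵀ *ᵥ x) i)).symm

lemma quad_le_sup (hd : 1 ≤ d) (x : Fin d → ℝ) :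
    x ⬝ᵥ (M *ᵥ x) ≤ (⨆ i, hM.eigenvalues i) * (x ⬝ᵥ x) := by
  have : Nonempty (Fin d) := ⟨⟨0, hd⟩⟩
  rw [quad_diag hM, norm_sq_diag hM x, Finset.mul_sum]
  refine Finset.sum_le_sum fun i _ => ?_
  exact mul_le_mul_of_nonneg_right
    (le_ciSup (Set.Finite.bddAbove (Set.finite_range _)) i) (sq_nonneg _)

lemma sum_eigs_eq : ∑ i, hM.eigenvalues i = M.trace := by
  conv_rhs => rw [spectral_real hM]
  rw [Matrix.trace_mul_comm, ← Matrix.mul_assoc, WtW hM, Matrix.one_mul]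
  simp [Matrix.trace, Matrix.diag]

lemma mulVec_basis (i : Fin d) :
    M *ᵥ (fun j => (hM.eigenvectorUnitary : Matrix (Fin d) (Fin d) ℝ) j i)
      = hM.eigenvalues i • (fun j => (hM.eigenvectorUnitary : Matrix (Fin d) (Fin d) ℝ) j i) := by
  have h := hM.mulVec_eigenvectorBasis i
  convert h using 2 <;> rfl

lemma basis_norm (i : Fin d) :
    (fun j => (hM.eigenvectorUnitary : Matrix (Fin d) (Fin d) ℝ) j i) ⬝ᵥ
      (fun j => (hM.eigenvectorUnitary : Matrix (Fin d) (Fin d) ℝ) j i) = 1 := by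
  have h := congrFun (congrFun (WtW hM) i) i
  simpa [Matrix.mul_apply, Matrix.one_apply, dotProduct] using h

lemma continuous_quadForm (M : Matrix (Fin d) (Fin d) ℝ) :
    Continuous fun x : Fin d → ℝ => x ⬝ᵥ (M *ᵥ x) := by
  show Continuous fun x : Fin d → ℝ => ∑ i, x i * ∑ j, M i j * x j
  exact continuous_finset_sum _ fun i _ => (continuous_apply i).mul
    (continuous_finset_sum _ fun j _ => continuous_const.mul (continuous_apply j))

lemma gauss_pdf_prod (x : Fin d → ℝ) :
    ∏ i, gaussianPDFReal 0 1 (x i) = (Real.sqrt (2*π))⁻¹ ^ d * Real.exp (-(x ⬝ᵥ x)/2) := by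
  simp only [gaussianPDFReal, NNReal.coe_one, mul_one, sub_zero]
  rw [Finset.prod_mul_distrib, Finset.prod_const, ← Real.exp_sum]
  simp only [dotProduct, Finset.card_univ, Fintype.card_fin, one_div]
  congr 1
  rw [← Finset.sum_div, ← Finset.sum_neg_distrib]
  congr 2
  exact Finset.sum_congr rfl fun i _ => by ring

lemma pi_gauss_eq :
    (Measure.pi fun _ : Fin d => gaussianReal 0 1) =
      (volume : Measure (Fin d → ℝ)).withDensity
        (fun x => ENNReal.ofReal (∏ i, gaussianPDFReal 0 1 (x i))) := by
  refine (Measure.pi_eq fun s hs => ?_)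
  rw [withDensity_apply _ (MeasurableSet.univ_pi hs)]
  have hind : ∀ x : Fin d → ℝ, (Set.univ.pi s).indicator
      (fun x => ENNReal.ofReal (∏ i, gaussianPDFReal 0 1 (x i))) x
      = ENNReal.ofReal (∏ i, (s i).indicator (gaussianPDFReal 0 1) (x i)) := by
    intro x
    by_cases hx : x ∈ Set.univ.pi s
    · rw [Set.indicator_of_mem hx]
      congr 1
      exact (Finset.prod_congr rfl fun i _ =>
        (Set.indicator_of_mem (hx i (Set.mem_univ i)) _).symm)
    · rw [Set.indicator_of_notMem hx]
      rw [Set.mem_univ_pi] at hx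
      push_neg at hx
      obtain ⟨j, hj⟩ := hx
      rw [Finset.prod_eq_zero (Finset.mem_univ j) (Set.indicator_of_notMem hj _),
        ENNReal.ofReal_zero]
  rw [← lintegral_indicator (MeasurableSet.univ_pi hs)]
  simp_rw [hind]
  have hInt : ∀ i : Fin d, Integrable ((s i).indicator (gaussianPDFReal 0 1)) := fun i =>
    (integrable_gaussianPDFReal 0 1).indicator (hs i)
  rw [← ofReal_integral_eq_lintegral_ofReal]
  · rw [MeasureTheory.integral_fintype_prod_volume_eq_prod (f := fun (i : Fin d) =>
      (s i).indicator (gaussianPDFReal 0 1))]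
    rw [ENNReal.ofReal_prod_of_nonneg (fun i _ => integral_nonneg
      (fun y => Set.indicator_nonneg (fun z _ => gaussianPDFReal_nonneg 0 1 z) y))]
    refine Finset.prod_congr rfl fun i _ => ?_
    rw [integral_indicator (hs i), gaussianReal_apply_eq_integral _ one_ne_zero]
  · exact Integrable.fintype_prod fun i => hInt i
  · exact Filter.Eventually.of_forall fun x => Finset.prod_nonneg fun i _ =>
      Set.indicator_nonneg (fun z _ => gaussianPDFReal_nonneg 0 1 z) _

lemma joint_law {Ω : Type*} [MeasurableSpace Ω] (P : Measure Ω) [IsProbabilityMeasure P]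
    (v : Ω → Fin d → ℝ)
    (hmeas : ∀ i, Measurable fun ω => v ω i)
    (hIndep : iIndepFun (fun i ω => v ω i) P)
    (hlaw : ∀ i, P.map (fun ω => v ω i) = gaussianReal 0 1) :
    P.map v = (Measure.pi fun _ : Fin d => gaussianReal 0 1) := by
  have hv : Measurable v := measurable_pi_lambda v hmeas
  refine (Measure.pi_eq fun s hs => ?_).symm
  rw [Measure.map_apply hv (MeasurableSet.univ_pi hs)]
  have hpre : v ⁻¹' Set.univ.pi s = ⋂ i ∈ (Finset.univ : Finset (Fin d)),
      (fun ω => v ω i) ⁻¹' s i := by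
    ext ω
    simp [Set.mem_univ_pi]
  rw [hpre, hIndep.measure_inter_preimage_eq_mul Finset.univ (fun i _ => hs i)]
  refine Finset.prod_congr rfl fun i _ => ?_
  rw [← Measure.map_apply (hmeas i) (hs i), hlaw i]

lemma continuous_pdfProd :
    Continuous fun x : Fin d → ℝ => ∏ i, gaussianPDFReal 0 1 (x i) := by
  refine continuous_finset_prod _ fun i _ => ?_
  have h : Continuous (gaussianPDFReal 0 1) := by
    unfold gaussianPDFReal
    fun_prop
  exact h.comp (continuous_apply i)

lemma map_W_volume :
    Measure.map (Matrix.toLin' (hM.eigenvectorUnitary : Matrix (Fin d) (Fin d) ℝ))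
      (volume : Measure (Fin d → ℝ)) = volume := by
  set W := (hM.eigenvectorUnitary : Matrix (Fin d) (Fin d) ℝ)
  have hdet2 : W.det * W.det = 1 := by
    have h := congrArg Matrix.det (WtW hM)
    rwa [Matrix.det_mul, Matrix.det_transpose, Matrix.det_one] at h
  have hdet0 : W.det ≠ 0 := by
    intro h; rw [h, mul_zero] at hdet2; exact zero_ne_one hdet2
  have habs : |W.det⁻¹| = 1 := by
    rcases mul_self_eq_one_iff.mp hdet2 with h | h <;> rw [h] <;> norm_num
  rw [Real.map_matrix_volume_pi_eq_smul_volume_pi hdet0, habs]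
  simp

lemma integral_gauss_smul (g : (Fin d → ℝ) → ℝ) :
    ∫ x, g x ∂(Measure.pi fun _ : Fin d => gaussianReal 0 1)
      = ∫ x, (∏ i, gaussianPDFReal 0 1 (x i)) * g x := by
  rw [pi_gauss_eq]
  have hmeas : Measurable fun x : Fin d → ℝ => (∏ i, gaussianPDFReal 0 1 (x i)).toNNReal :=
    (continuous_pdfProd.measurable).real_toNNReal
  have heq : (fun x : Fin d → ℝ => ENNReal.ofReal (∏ i, gaussianPDFReal 0 1 (x i)))
      = fun x => ((∏ i, gaussianPDFReal 0 1 (x i)).toNNReal : ℝ≥0∞) := rfl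
  rw [heq, integral_withDensity_eq_integral_smul hmeas g]
  refine integral_congr_ae (Filter.Eventually.of_forall fun x => ?_)
  simp [NNReal.smul_def, Real.coe_toNNReal _ (Finset.prod_nonneg fun i _ =>
    gaussianPDFReal_nonneg 0 1 (x i))]

lemma integrable_gauss_iff (g : (Fin d → ℝ) → ℝ) :
    Integrable g (Measure.pi fun _ : Fin d => gaussianReal 0 1)
      ↔ Integrable (fun x => (∏ i, gaussianPDFReal 0 1 (x i)) * g x) volume := by
  rw [pi_gauss_eq]
  have hmeas : Measurable fun x : Fin d → ℝ => (∏ i, gaussianPDFReal 0 1 (x i)).toNNReal :=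
    (continuous_pdfProd.measurable).real_toNNReal
  have heq : (fun x : Fin d → ℝ => ENNReal.ofReal (∏ i, gaussianPDFReal 0 1 (x i)))
      = fun x => ((∏ i, gaussianPDFReal 0 1 (x i)).toNNReal : ℝ≥0∞) := rfl
  rw [heq, integrable_withDensity_iff_integrable_coe_smul hmeas]
  apply integrable_congr
  refine Filter.Eventually.of_forall fun x => ?_
  simp [NNReal.smul_def, Real.coe_toNNReal _ (Finset.prod_nonneg fun i _ =>
    gaussianPDFReal_nonneg 0 1 (x i))]

lemma mgf_formula (S : Matrix (Fin d) (Fin d) ℝ) (hS : S.IsHermitian) (c : ℝ)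
    (hts : ∀ i, c * hS.eigenvalues i < 1/2) :
    Integrable (fun x : Fin d → ℝ => Real.exp (c * (x ⬝ᵥ S *ᵥ x)))
      (Measure.pi fun _ : Fin d => gaussianReal 0 1)
    ∧ ∫ x, Real.exp (c * (x ⬝ᵥ S *ᵥ x)) ∂(Measure.pi fun _ : Fin d => gaussianReal 0 1)
        = ∏ i, (Real.sqrt (1 - 2*c*hS.eigenvalues i))⁻¹ := by
  set W := (hS.eigenvectorUnitary : Matrix (Fin d) (Fin d) ℝ) with hW
  set ν := hS.eigenvalues with hν
  set G : (Fin d → ℝ) → ℝ :=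
    fun x => (∏ i, gaussianPDFReal 0 1 (x i)) * Real.exp (c * (x ⬝ᵥ S *ᵥ x)) with hG
  have hGcont : Continuous G :=
    continuous_pdfProd.mul ((continuous_const.mul (continuous_quadForm S)).rexp)
  have hb : ∀ i, (0:ℝ) < 1/2 - c * ν i := fun i => by have := hts i; linarith
  have hcomp : ∀ y : Fin d → ℝ, G (Matrix.toLin' W y)
      = ∏ i, ((Real.sqrt (2*π))⁻¹ * Real.exp (-(1/2 - c * ν i) * (y i)^2)) := by
    intro y
    rw [Matrix.toLin'_apply, hG]
    simp only
    rw [gauss_pdf_prod, dot_W hS, quad_W hS]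
    rw [Finset.prod_mul_distrib, Finset.prod_const, Finset.card_univ, Fintype.card_fin,
      ← Real.exp_sum, mul_assoc, ← Real.exp_add]
    congr 1
    have : y ⬝ᵥ y = ∑ i, (y i)^2 := by
      simp only [dotProduct]; exact Finset.sum_congr rfl fun i _ => (sq (y i)).symm
    rw [this, Finset.mul_sum, ← hν]
    rw [show (∑ x, -(1/2 - c * ν x) * (y x)^2) = ∑ i, (c * (ν i * (y i)^2) - (y i)^2/2) from
      Finset.sum_congr rfl fun i _ => by ring]
    rw [Finset.sum_sub_distrib, ← Finset.sum_div]
    ring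
  have hint1d : ∀ i : Fin d, Integrable
      (fun y : ℝ => (Real.sqrt (2*π))⁻¹ * Real.exp (-(1/2 - c * ν i) * y^2)) :=
    fun i => (integrable_exp_neg_mul_sq (hb i)).const_mul _
  have hIntProd : Integrable (fun y : Fin d → ℝ =>
      ∏ i, ((Real.sqrt (2*π))⁻¹ * Real.exp (-(1/2 - c * ν i) * (y i)^2))) volume :=
    Integrable.fintype_prod fun i => hint1d i
  have hφmeas : Measurable (Matrix.toLin' W) :=
    (Matrix.toLin' W).continuous_of_finiteDimensional.measurable
  have hGmap : AEStronglyMeasurable G (Measure.map (Matrix.toLin' W) volume) :=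
    hGcont.aestronglyMeasurable
  have hIntG : Integrable G volume := by
    have h1 : Integrable G (Measure.map (Matrix.toLin' W) volume) := by
      rw [(integrable_map_measure hGmap hφmeas.aemeasurable : _)]
      apply (integrable_congr (Filter.Eventually.of_forall fun y => (hcomp y).symm)).mp hIntProd
    rwa [map_W_volume hS] at h1
  constructor
  · rw [integrable_gauss_iff]
    exact hIntG
  · rw [integral_gauss_smul]
    have h2 : ∫ x, G x ∂volume = ∫ y, G (Matrix.toLin' W y) ∂volume := by
      conv_lhs => rw [← map_W_volume hS]
      exact integral_map hφmeas.aemeasurable hGmap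
    rw [(rfl : (fun x => (∏ i, gaussianPDFReal 0 1 (x i)) * Real.exp (c * (x ⬝ᵥ S *ᵥ x))) = G)]
    rw [h2]
    rw [integral_congr_ae (Filter.Eventually.of_forall hcomp)]
    rw [MeasureTheory.integral_fintype_prod_volume_eq_prod (f := fun (i : Fin d) (y : ℝ) =>
      (Real.sqrt (2*π))⁻¹ * Real.exp (-(1/2 - c * ν i) * y^2))]
    refine Finset.prod_congr rfl fun i _ => ?_
    rw [integral_const_mul, integral_gaussian]
    have hbi := hb i
    have h2b : (0:ℝ) < 2 * π := by positivity
    rw [← Real.sqrt_inv, ← Real.sqrt_mul (by positivity)]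
    rw [show (2*π)⁻¹ * (π / (1/2 - c * ν i)) = (1 - 2*c*ν i)⁻¹ by
      have hπ : π ≠ 0 := Real.pi_ne_zero
      have hbne : (1/2 - c * ν i) ≠ 0 := ne_of_gt (hb i)
      rw [show (1:ℝ) - 2*c*ν i = 2*(1/2 - c*ν i) by ring, div_eq_mul_inv, mul_inv, mul_inv,
        mul_assoc, ← mul_assoc π⁻¹ π, inv_mul_cancel₀ hπ, one_mul]]
    rw [Real.sqrt_inv]

set_option maxHeartbeats 2000000 in
lemma one_sided (hd : 1 ≤ d) (A : Matrix (Fin d) (Fin d) ℝ)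
    (htr : A.trace = 0) (hAA : A * A = 0) (s : ℝ) (hs : 0 < s)
    (hquad : ∀ u : Fin d → ℝ, (A *ᵥ u) ⬝ᵥ (A *ᵥ u) ≤ s^2/2 * (u ⬝ᵥ u))
    (ε : ℝ) (hε : 0 < ε) :
    (Measure.pi fun _ : Fin d => gaussianReal 0 1) {x | ε ≤ x ⬝ᵥ (A *ᵥ x)}
      ≤ ENNReal.ofReal (Real.exp (-(ε^2) / (4*s*(ε + d*s)))) := by
  set γ := (Measure.pi fun _ : Fin d => gaussianReal 0 1) with hγ
  set S := A + Aᵀ with hSdef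
  have hS : S.IsHermitian := herm_add_tr A
  set ν := hS.eigenvalues with hν
  have hSx : ∀ x : Fin d → ℝ, x ⬝ᵥ (S *ᵥ x) = 2*(x ⬝ᵥ (A *ᵥ x)) := by
    intro x
    rw [hSdef, Matrix.add_mulVec, dotProduct_add, dot_tr, dotProduct_comm]
    ring
  have hbound : ∀ i, |ν i| ≤ s := by
    intro i
    set u : Fin d → ℝ := fun j => (hS.eigenvectorUnitary : Matrix (Fin d) (Fin d) ℝ) j i with hu
    have heig : S *ᵥ u = ν i • u := mulVec_basis hS i
    have hnorm : u ⬝ᵥ u = 1 := basis_norm hS i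
    have huSu : u ⬝ᵥ (S *ᵥ u) = ν i := by
      rw [heig, dotProduct_smul, smul_eq_mul, hnorm, mul_one]
    have huAu : u ⬝ᵥ (A *ᵥ u) = ν i / 2 := by
      have := hSx u
      rw [huSu] at this
      linarith
    have hAtAu : Aᵀ *ᵥ (A *ᵥ u) = ν i • (Aᵀ *ᵥ u) := by
      have h1 : Aᵀ *ᵥ (S *ᵥ u) = ν i • (Aᵀ *ᵥ u) := by rw [heig, Matrix.mulVec_smul]
      rw [hSdef, Matrix.add_mulVec] at h1
      rw [Matrix.mulVec_add] at h1
      have h2 : Aᵀ *ᵥ (Aᵀ *ᵥ u) = 0 := by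
        rw [Matrix.mulVec_mulVec, ← Matrix.transpose_mul, hAA, Matrix.transpose_zero,
          Matrix.zero_mulVec]
      rw [h2, add_zero] at h1
      exact h1
    have hAu2 : (A *ᵥ u) ⬝ᵥ (A *ᵥ u) = ν i ^ 2 / 2 := by
      have h3 : u ⬝ᵥ (Aᵀ *ᵥ (A *ᵥ u)) = (A *ᵥ u) ⬝ᵥ (A *ᵥ u) := dot_tr A u (A *ᵥ u)
      rw [hAtAu] at h3
      rw [dotProduct_smul, smul_eq_mul] at h3
      have h4 : u ⬝ᵥ (Aᵀ *ᵥ u) = ν i / 2 := by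
        rw [dot_tr, dotProduct_comm, huAu]
      rw [h4] at h3
      rw [← h3]; ring
    have h5 := hquad u
    rw [hAu2, hnorm, mul_one] at h5
    rw [abs_le]
    constructor <;> nlinarith
  have hsum : ∑ i, ν i = 0 := by
    rw [hν, sum_eigs_eq hS, hSdef, Matrix.trace_add, Matrix.trace_transpose, htr, add_zero]
  set D : ℝ := d * s^2 + s*ε with hD
  have hD0 : (0:ℝ) < D := by
    have h1 : (0:ℝ) < s*ε := mul_pos hs hε
    have h2 : (0:ℝ) ≤ (d:ℝ) * s^2 := by positivity
    rw [hD]; linarith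
  set t : ℝ := ε / (2*D) with ht
  have ht0 : 0 ≤ t := le_of_lt (div_pos hε (by linarith))
  have hts : t * s ≤ 1/2 := by
    rw [ht, div_mul_eq_mul_div, div_le_iff₀ (by linarith : (0:ℝ) < 2*D)]
    have : s * ε ≤ D := by
      rw [hD]; nlinarith [sq_nonneg s]
    nlinarith
  have htν : ∀ i, t * ν i ≤ 1/2 := fun i => by
    have h1 : t * ν i ≤ t * s := by
      have := (abs_le.mp (hbound i)).2
      exact mul_le_mul_of_nonneg_left this ht0
    linarith
  have hpos1 : ∀ i, (0:ℝ) < 1 - t * ν i := fun i => by have := htν i; linarith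
  have hc : ∀ i, (t/2) * hS.eigenvalues i < 1/2 := by
    intro i
    have h1 : (t/2) * ν i ≤ (1:ℝ)/4 := by
      have h2 : (t/2) * ν i ≤ (t/2) * s := by
        have := (abs_le.mp (hbound i)).2
        exact mul_le_mul_of_nonneg_left this (by linarith)
      nlinarith
    rw [← hν]; linarith
  obtain ⟨hInt, hval⟩ := mgf_formula S hS (t/2) hc
  have hfun : (fun x : Fin d → ℝ => Real.exp ((t/2) * (x ⬝ᵥ S *ᵥ x)))
      = fun x => Real.exp (t * (x ⬝ᵥ A *ᵥ x)) := by
    funext x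
    rw [hSx x]; congr 1; ring
  rw [hfun] at hInt hval
  have hmark := measure_ge_le_exp_mul_mgf (X := fun x : Fin d → ℝ => x ⬝ᵥ A *ᵥ x)
    (μ := γ) (t := t) ε ht0 hInt
  have hmgf : mgf (fun x : Fin d → ℝ => x ⬝ᵥ A *ᵥ x) γ t
      = ∏ i, (Real.sqrt (1 - t * ν i))⁻¹ := by
    rw [mgf]
    rw [hγ, hval]
    refine Finset.prod_congr rfl fun i _ => ?_
    rw [← hν]
    congr 2
    ring
  have hprod : ∏ i, (Real.sqrt (1 - t*ν i))⁻¹ = Real.exp (∑ i, -(Real.log (1 - t*ν i)/2)) := by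
    rw [Real.exp_sum]
    refine Finset.prod_congr rfl fun i _ => ?_
    rw [← Real.log_sqrt (le_of_lt (hpos1 i)), Real.exp_neg,
      Real.exp_log (Real.sqrt_pos.mpr (hpos1 i))]
  have hsumlog : ∑ i, -(Real.log (1 - t*ν i)/2) ≤ t^2 * d * s^2 := by
    have h1 : ∀ i ∈ Finset.univ, -(Real.log (1 - t*ν i)/2) ≤ t*ν i/2 + (t*ν i)^2 := by
      intro i _
      have := neg_log_le (htν i)
      linarith
    calc ∑ i, -(Real.log (1 - t*ν i)/2) ≤ ∑ i, (t*ν i/2 + (t*ν i)^2) := Finset.sum_le_sum h1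
      _ = (t/2) * (∑ i, ν i) + t^2 * ∑ i, (ν i)^2 := by
          rw [Finset.sum_add_distrib, Finset.mul_sum, Finset.mul_sum]
          congr 1
          · exact Finset.sum_congr rfl fun i _ => by ring
          · exact Finset.sum_congr rfl fun i _ => by ring
      _ ≤ t^2 * d * s^2 := by
          rw [hsum, mul_zero, zero_add]
          have h2 : ∑ i, (ν i)^2 ≤ (d:ℝ) * s^2 := by
            calc ∑ i, (ν i)^2 ≤ ∑ _i : Fin d, s^2 := Finset.sum_le_sum fun i _ => by
                  have := hbound i; nlinarith [abs_nonneg (ν i), sq_abs (ν i)]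
              _ = (d:ℝ) * s^2 := by
                  rw [Finset.sum_const, Finset.card_univ, Fintype.card_fin, nsmul_eq_mul]
          nlinarith [sq_nonneg t]
  have hrhs : Real.exp (-t*ε) * ∏ i, (Real.sqrt (1 - t*ν i))⁻¹
      ≤ Real.exp (-(ε^2) / (4*s*(ε + d*s))) := by
    rw [hprod, ← Real.exp_add]
    apply Real.exp_le_exp.mpr
    have hkey : -(ε^2) / (4*s*(ε + d*s)) = -(t*ε) + t*ε/2 := by
      rw [ht]
      have h4 : 4*s*(ε + d*s) = 4*D := by rw [hD]; ring
      rw [h4]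
      field_simp
      ring
    rw [hkey]
    have htds : t * (d * s^2) ≤ ε/2 := by
      rw [ht, div_mul_eq_mul_div, div_le_iff₀ (by linarith : (0:ℝ) < 2*D)]
      have h5 : (d:ℝ)*s^2 ≤ D := by rw [hD]; nlinarith
      rw [show ε/2*(2*D) = ε*D by ring]
      exact mul_le_mul_of_nonneg_left h5 hε.le
    have h6 : t^2 * d * s^2 ≤ t * ε / 2 := by
      have := mul_le_mul_of_nonneg_left htds ht0
      calc t^2 * d * s^2 = t * (t * (d * s^2)) := by ring
        _ ≤ t * (ε/2) := this
        _ = t * ε / 2 := by ring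
    linarith [hsumlog]
  have hfin : (γ {x | ε ≤ x ⬝ᵥ A *ᵥ x}).toReal ≤ Real.exp (-(ε^2) / (4*s*(ε + d*s))) := by
    calc (γ {x | ε ≤ x ⬝ᵥ A *ᵥ x}).toReal
        ≤ Real.exp (-t*ε) * mgf (fun x : Fin d → ℝ => x ⬝ᵥ A *ᵥ x) γ t := hmark
      _ = Real.exp (-t*ε) * ∏ i, (Real.sqrt (1 - t*ν i))⁻¹ := by rw [hmgf]
      _ ≤ _ := hrhs
  have hne : γ {x | ε ≤ x ⬝ᵥ A *ᵥ x} ≠ ⊤ := measure_ne_top _ _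
  calc γ {x | ε ≤ x ⬝ᵥ A *ᵥ x} = ENNReal.ofReal ((γ {x | ε ≤ x ⬝ᵥ A *ᵥ x}).toReal) :=
        (ENNReal.ofReal_toReal hne).symm
    _ ≤ ENNReal.ofReal (Real.exp (-(ε^2) / (4*s*(ε + d*s)))) := ENNReal.ofReal_le_ofReal hfin

/-- Explicit deviation bound for nilpotent traceless Gaussian quadratic forms: for `v` a
vector of `d ≥ 1` i.i.d. standard normals and `A` a (not necessarily symmetric) `d × d` real
matrix with `tr A = 0` and `A * A = 0`, if the largest eigenvalue `lamSym` of `A + Aᵀ` is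
positive then `P(|v'Av| ≥ ε) ≤ 4 exp(-d ε²/(4 d √(2 λ_d(AᵀA)) (ε + d √(2 λ_d(AᵀA)))))` where
`lamATA` is the largest eigenvalue of `AᵀA`, and if `lamSym = 0` then this probability is
zero. -/
theorem nilpotent_traceless_gaussian_quadratic_form_explicit (d : ℕ) (hd : 1 ≤ d)
    {Ω : Type*} [MeasurableSpace Ω] (P : Measure Ω) [IsProbabilityMeasure P]
    (v : Ω → Fin d → ℝ)
    (hmeas : ∀ i, Measurable fun ω => v ω i)
    (hIndep : iIndepFun (fun i ω => v ω i) P)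
    (hlaw : ∀ i, P.map (fun ω => v ω i) = gaussianReal 0 1)
    (A : Matrix (Fin d) (Fin d) ℝ) (htr : A.trace = 0) (hAA : A * A = 0)
    (hSym : (A + Aᵀ).IsHermitian) (hATA : (Aᵀ * A).IsHermitian)
    (lamSym lamATA : ℝ)
    (hlamSym : lamSym = ⨆ i, hSym.eigenvalues i)
    (hlamATA : lamATA = ⨆ i, hATA.eigenvalues i)
    (ε : ℝ) (hε : 0 < ε) :
    (0 < lamSym → P {ω | ε ≤ |v ω ⬝ᵥ (A *ᵥ v ω)|}
        ≤ ENNReal.ofReal (4 * Real.exp (- (d : ℝ) * ε ^ 2 /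
            (4 * (d : ℝ) * Real.sqrt (2 * lamATA) *
              (ε + (d : ℝ) * Real.sqrt (2 * lamATA)))))) ∧
    (lamSym = 0 → P {ω | ε ≤ |v ω ⬝ᵥ (A *ᵥ v ω)|} = 0) := by
  have hNE : Nonempty (Fin d) := ⟨⟨0, hd⟩⟩
  set γ := (Measure.pi fun _ : Fin d => gaussianReal 0 1) with hγ
  have hmap : P.map v = γ := joint_law P v hmeas hIndep hlaw
  have hv : Measurable v := measurable_pi_lambda v hmeas
  have htransfer : ∀ B : Matrix (Fin d) (Fin d) ℝ,
      P {ω | ε ≤ v ω ⬝ᵥ (B *ᵥ v ω)} = γ {x | ε ≤ x ⬝ᵥ (B *ᵥ x)} := by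
    intro B
    have hmeasset : MeasurableSet {x : Fin d → ℝ | ε ≤ x ⬝ᵥ (B *ᵥ x)} :=
      measurableSet_le measurable_const (continuous_quadForm B).measurable
    rw [← hmap, Measure.map_apply hv hmeasset]
    rfl
  constructor
  · intro hlamPos
    have hQ : ∀ x : Fin d → ℝ, x ⬝ᵥ ((Aᵀ*A) *ᵥ x) ≤ lamATA * (x ⬝ᵥ x) := by
      intro x; rw [hlamATA]; exact quad_le_sup hATA hd x
    have hAx : ∀ x : Fin d → ℝ, (A *ᵥ x) ⬝ᵥ (A *ᵥ x) ≤ lamATA * (x ⬝ᵥ x) := by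
      intro x
      have h1 := hQ x
      rwa [show x ⬝ᵥ ((Aᵀ*A) *ᵥ x) = (A *ᵥ x) ⬝ᵥ (A *ᵥ x) by
        rw [← Matrix.mulVec_mulVec, dot_tr]] at h1
    have hlam0 : 0 < lamATA := by
      by_contra h
      push_neg at h
      have hAv : ∀ x : Fin d → ℝ, A *ᵥ x = 0 := by
        intro x
        have h1 := hAx x
        have h2 : (A *ᵥ x) ⬝ᵥ (A *ᵥ x) ≤ 0 := by
          have h3 : (0:ℝ) ≤ x ⬝ᵥ x := Finset.sum_nonneg fun i _ => mul_self_nonneg _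
          nlinarith
        have h4 : (0:ℝ) ≤ (A *ᵥ x) ⬝ᵥ (A *ᵥ x) :=
          Finset.sum_nonneg fun i _ => mul_self_nonneg _
        exact dotProduct_self_eq_zero.mp (le_antisymm h2 h4)
      have hA0 : A = 0 := by
        ext i j
        have h5 := congrFun (hAv (Pi.single j 1)) i
        simpa [Matrix.mulVec_single] using h5
      have hS0 : A + Aᵀ = 0 := by rw [hA0]; simp
      have heigs : ∀ i, hSym.eigenvalues i = 0 := by
        intro i
        have heq : hSym.eigenvalues i • (fun j =>
            (hSym.eigenvectorUnitary : Matrix (Fin d) (Fin d) ℝ) j i) = 0 := by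
          rw [← mulVec_basis hSym i]
          have hz : ∀ u : Fin d → ℝ, (A + Aᵀ) *ᵥ u = 0 := fun u => by
            rw [hS0, Matrix.zero_mulVec]
          exact hz _
        rcases smul_eq_zero.mp heq with h6 | h6
        · exact h6
        · exfalso
          have h7 := basis_norm hSym i
          rw [show (fun j => ((hSym.eigenvectorUnitary : Matrix (Fin d) (Fin d) ℝ)) j i)
              = 0 from h6] at h7
          simp [dotProduct] at h7
      have h8 : lamSym = 0 := by
        rw [hlamSym]
        simp only [heigs]
        exact ciSup_const
      linarith
    set s := Real.sqrt (2*lamATA) with hsdef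
    have hs0 : 0 < s := Real.sqrt_pos.mpr (by linarith)
    have hs2 : s^2 = 2*lamATA := Real.sq_sqrt (by linarith)
    have hquadA : ∀ u : Fin d → ℝ, (A *ᵥ u) ⬝ᵥ (A *ᵥ u) ≤ s^2/2 * (u ⬝ᵥ u) := by
      intro u
      rw [hs2, show (2*lamATA)/2 = lamATA by ring]
      exact hAx u
    have hb1 := one_sided hd A htr hAA s hs0 hquadA ε hε
    have hb2 := one_sided hd (-A) (by rw [Matrix.trace_neg, htr, neg_zero])
      (by rw [Matrix.neg_mul, Matrix.mul_neg, hAA]; simp) s hs0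
      (fun u => by
        rw [Matrix.neg_mulVec, neg_dotProduct, dotProduct_neg, neg_neg]
        exact hquadA u) ε hε
    have hsub : {ω | ε ≤ |v ω ⬝ᵥ (A *ᵥ v ω)|} ⊆
        {ω | ε ≤ v ω ⬝ᵥ (A *ᵥ v ω)} ∪ {ω | ε ≤ v ω ⬝ᵥ ((-A) *ᵥ v ω)} := by
      intro ω hω
      have hω' : ε ≤ |v ω ⬝ᵥ (A *ᵥ v ω)| := hω
      rcases le_abs.mp hω' with h | h
      · exact Or.inl h
      · refine Or.inr ?_
        show ε ≤ v ω ⬝ᵥ ((-A) *ᵥ v ω)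
        rw [Matrix.neg_mulVec, dotProduct_neg]
        exact h
    have e := Real.exp (-(ε^2) / (4*s*(ε + d*s)))
    have hexp_eq : - (d : ℝ) * ε ^ 2 / (4 * (d : ℝ) * s * (ε + (d : ℝ) * s))
        = -(ε^2) / (4*s*(ε + d*s)) := by
      have hd0 : (d:ℝ) ≠ 0 := by
        have : (0:ℝ) < d := by exact_mod_cast Nat.lt_of_lt_of_le Nat.zero_lt_one hd
        exact this.ne'
      rw [show - (d : ℝ) * ε ^ 2 = (d:ℝ) * (-(ε^2)) by ring,
        show 4 * (d : ℝ) * s * (ε + (d : ℝ) * s) = (d:ℝ) * (4*s*(ε + d*s)) by ring]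
      exact mul_div_mul_left _ _ hd0
    calc P {ω | ε ≤ |v ω ⬝ᵥ (A *ᵥ v ω)|}
        ≤ P ({ω | ε ≤ v ω ⬝ᵥ (A *ᵥ v ω)} ∪ {ω | ε ≤ v ω ⬝ᵥ ((-A) *ᵥ v ω)}) :=
          measure_mono hsub
      _ ≤ P {ω | ε ≤ v ω ⬝ᵥ (A *ᵥ v ω)} + P {ω | ε ≤ v ω ⬝ᵥ ((-A) *ᵥ v ω)} :=
          measure_union_le _ _
      _ ≤ ENNReal.ofReal (Real.exp (-(ε^2) / (4*s*(ε + d*s))))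
          + ENNReal.ofReal (Real.exp (-(ε^2) / (4*s*(ε + d*s)))) := by
          refine add_le_add ?_ ?_
          · rw [htransfer A]; exact hb1
          · rw [htransfer (-A)]; exact hb2
      _ ≤ ENNReal.ofReal (4 * Real.exp (- (d : ℝ) * ε ^ 2 /
            (4 * (d : ℝ) * s * (ε + (d : ℝ) * s)))) := by
          rw [← ENNReal.ofReal_add (Real.exp_nonneg _) (Real.exp_nonneg _)]
          apply ENNReal.ofReal_le_ofReal
          rw [hexp_eq]
          have hpos := Real.exp_pos (-(ε^2) / (4*s*(ε + d*s)))
          linarith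
  · intro hlam0
    have hbdd : BddAbove (Set.range hSym.eigenvalues) :=
      Set.Finite.bddAbove (Set.finite_range _)
    have heignonpos : ∀ i, hSym.eigenvalues i ≤ 0 := by
      intro i
      have := le_ciSup hbdd i
      rw [← hlamSym, hlam0] at this
      exact this
    have htrace0 : (A + Aᵀ).trace = 0 := by
      rw [Matrix.trace_add, Matrix.trace_transpose, htr, add_zero]
    have hsum0 : ∑ i, hSym.eigenvalues i = 0 := by
      rw [sum_eigs_eq hSym, htrace0]
    have hzero : ∀ i ∈ Finset.univ, hSym.eigenvalues i = 0 :=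
      (Finset.sum_eq_zero_iff_of_nonpos fun i _ => heignonpos i).mp hsum0
    have hq0 : ∀ x : Fin d → ℝ, x ⬝ᵥ (A *ᵥ x) = 0 := by
      intro x
      have h1 : x ⬝ᵥ ((A + Aᵀ) *ᵥ x) = 2*(x ⬝ᵥ (A *ᵥ x)) := by
        rw [Matrix.add_mulVec, dotProduct_add, dot_tr, dotProduct_comm]
        ring
      have h2 : x ⬝ᵥ ((A + Aᵀ) *ᵥ x) = 0 := by
        rw [quad_diag hSym]
        exact Finset.sum_eq_zero fun i _ => by rw [hzero i (Finset.mem_univ i), zero_mul]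
      rw [h2] at h1
      linarith
    have hempty : {ω | ε ≤ |v ω ⬝ᵥ (A *ᵥ v ω)|} = ∅ := by
      ext ω
      simp only [Set.mem_setOf_eq, Set.mem_empty_iff_false, iff_false, not_le, hq0 (v ω),
        abs_zero]
      exact hε
    rw [hempty, measure_empty]

end Stmt12
end

section
/- (Tail bound for noncentral chi-square with random noncentrality.) Fix integers d ≥ k ≥ 1. Let μ be a random vector in ℝ^k with ‖μ‖² > 0 almost surely, and let v be a random vector in ℝ^k with i.i.d. standard normal components, independent of μ; set B_d = ‖μ‖², so that ‖v + μ‖² conditional on μ follows a noncentral chi-square distribution with k degrees of freedom and noncentrality parameter B_d. Then for any ε > 0: P( |‖v + μ‖²/d − (k + B_d)/d| ≥ ε ) ≤ 2·E[ exp( − d·ε² / (4·(ε + 2·(k/d + B_d/d))) ) ] and P( ‖v + μ‖²/d − (k + B_d)/d ≥ ε ) ≤ E[ exp( − d·ε² / (4·(ε + 2·(k/d + B_d/d))) ) ]. -/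
open MeasureTheory ProbabilityTheory

open Real
open scoped NNReal ENNReal

lemma key_pdf (s a : ℝ) (hs : s < 1/2) (x : ℝ) :
    gaussianPDFReal 0 1 x * Real.exp (s*(x+a)^2)
      = (Real.sqrt (1-2*s)⁻¹ * Real.exp (s*a^2/(1-2*s))) *
        gaussianPDFReal (2*s*a/(1-2*s)) ⟨(1-2*s)⁻¹, inv_nonneg.mpr (by linarith)⟩ x := by
  have h1 : (0:ℝ) < 1 - 2*s := by linarith
  have hexp : -(x-0)^2/(2*(1:ℝ)) + s*(x+a)^2
      = s*a^2/(1-2*s) + -(x - 2*s*a/(1-2*s))^2 / (2*(1-2*s)⁻¹) := by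
    field_simp
    ring
  simp only [gaussianPDFReal, NNReal.coe_mk, NNReal.coe_one]
  change _ = _ * ((Real.sqrt (2*π*(1-2*s)⁻¹))⁻¹ *
    Real.exp (-(x - 2*s*a/(1-2*s))^2 / (2*(1-2*s)⁻¹)))
  rw [mul_assoc, ← Real.exp_add, hexp, Real.exp_add,
    Real.sqrt_mul (by positivity : (0:ℝ) ≤ 2*π) (1-2*s)⁻¹, mul_one]
  have h4 : Real.sqrt (1-2*s)⁻¹ ≠ 0 := by positivity
  have h3 : Real.sqrt (2*π) ≠ 0 := by positivity
  field_simp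

lemma gaussian_exp_sq (s a : ℝ) (hs : s < 1/2) :
    Integrable (fun x => Real.exp (s*(x+a)^2)) (gaussianReal 0 1) ∧
    ∫ x, Real.exp (s*(x+a)^2) ∂(gaussianReal 0 1)
      = Real.sqrt (1-2*s)⁻¹ * Real.exp (s*a^2/(1-2*s)) := by
  have h1 : (0:ℝ) < 1 - 2*s := by linarith
  set v' : ℝ≥0 := ⟨(1-2*s)⁻¹, inv_nonneg.mpr (by linarith)⟩ with hv'
  set C : ℝ := Real.sqrt (1-2*s)⁻¹ * Real.exp (s*a^2/(1-2*s)) with hC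
  have hdens : gaussianReal 0 1 = volume.withDensity
      (fun x => ((gaussianPDFReal 0 1 x).toNNReal : ℝ≥0∞)) := by
    rw [gaussianReal_of_var_ne_zero 0 one_ne_zero]; rfl
  have hmeaspdf : Measurable (fun x => (gaussianPDFReal 0 1 x).toNNReal) :=
    (measurable_gaussianPDFReal 0 1).real_toNNReal
  have hsmul : ∀ x : ℝ, (gaussianPDFReal 0 1 x).toNNReal • Real.exp (s*(x+a)^2)
      = C * gaussianPDFReal (2*s*a/(1-2*s)) v' x := by
    intro x
    rw [NNReal.smul_def, smul_eq_mul, Real.coe_toNNReal _ (gaussianPDFReal_nonneg 0 1 x)]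
    exact key_pdf s a hs x
  have hint : Integrable (fun x => Real.exp (s*(x+a)^2)) (gaussianReal 0 1) := by
    rw [hdens, integrable_withDensity_iff_integrable_smul hmeaspdf]
    simp only [hsmul]
    exact (integrable_gaussianPDFReal _ _).const_mul C
  refine ⟨hint, ?_⟩
  rw [hdens, integral_withDensity_eq_integral_smul hmeaspdf]
  simp only [hsmul]
  rw [integral_const_mul, integral_gaussianPDFReal_eq_one _ (by
    intro h; exact (inv_pos.mpr h1).ne' (congrArg (fun x : ℝ≥0 => (x:ℝ)) h)), mul_one]

lemma sqrt_le_exp_pos {s : ℝ} (hs0 : 0 ≤ s) (hs : s < 1/2) :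
    Real.sqrt (1-2*s)⁻¹ ≤ Real.exp (s + 2*s^2/(1-2*s)) := by
  have h1 : (0:ℝ) < 1 - 2*s := by linarith
  have key : (1-2*s)⁻¹ ≤ Real.exp (s + 2*s^2/(1-2*s)) ^ 2 := by
    rw [← Real.exp_nat_mul]
    have heq : (1-2*s)⁻¹ = 1 + (2*s + 4*s^2/(1-2*s)) := by field_simp; ring
    have hle := Real.add_one_le_exp (2*s + 4*s^2/(1-2*s))
    calc (1-2*s)⁻¹ = (2*s + 4*s^2/(1-2*s)) + 1 := by rw [heq]; ring
    _ ≤ Real.exp (2*s + 4*s^2/(1-2*s)) := hle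
    _ = Real.exp ((2:ℕ) * (s + 2*s^2/(1-2*s))) := by norm_num; ring_nf
  calc Real.sqrt (1-2*s)⁻¹ ≤ Real.sqrt (Real.exp (s + 2*s^2/(1-2*s)) ^ 2) :=
        Real.sqrt_le_sqrt key
  _ = Real.exp (s + 2*s^2/(1-2*s)) := Real.sqrt_sq (Real.exp_pos _).le

lemma sqrt_le_exp_neg {s : ℝ} (hs0 : 0 ≤ s) (hs : s < 1/2) :
    Real.sqrt (1+2*s)⁻¹ ≤ Real.exp (-s + 2*s^2/(1-2*s)) := by
  have h1 : (0:ℝ) < 1 - 2*s := by linarith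
  have h2 : (0:ℝ) < 1 + 2*s := by linarith
  have key : (1+2*s)⁻¹ ≤ Real.exp (-s + 2*s^2/(1-2*s)) ^ 2 := by
    rw [← Real.exp_nat_mul]
    have step1 : (1+2*s)⁻¹ ≤ 1 + (-(2*s) + 4*s^2) := by
      rw [inv_le_iff_one_le_mul₀ h2]
      nlinarith
    have step2 : 1 + (-(2*s) + 4*s^2) ≤ Real.exp (-(2*s) + 4*s^2) := by
      have := Real.add_one_le_exp (-(2*s) + 4*s^2); linarith
    have step3 : -(2*s) + 4*s^2 ≤ (2:ℕ) * (-s + 2*s^2/(1-2*s)) := by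
      have : 2*s^2 ≤ 2*s^2/(1-2*s) := by
        rw [le_div_iff₀ h1]; nlinarith
      push_cast; linarith
    exact step1.trans (step2.trans (Real.exp_le_exp.mpr step3))
  calc Real.sqrt (1+2*s)⁻¹ ≤ Real.sqrt (Real.exp (-s + 2*s^2/(1-2*s)) ^ 2) :=
        Real.sqrt_le_sqrt key
  _ = Real.exp (-s + 2*s^2/(1-2*s)) := Real.sqrt_sq (Real.exp_pos _).le

/-- mgf bounds for `(Z+a)^2`, `Z` standard gaussian, at `s` and `-s`. -/
lemma gaussian_mgf_bound (s a : ℝ) (hs0 : 0 ≤ s) (hs : s < 1/2) :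
    (∫ x, Real.exp (s*(x+a)^2) ∂(gaussianReal 0 1)
        ≤ Real.exp (s*(1+a^2) + 2*s^2*(1+a^2)/(1-2*s))) ∧
    (∫ x, Real.exp (-s*(x+a)^2) ∂(gaussianReal 0 1)
        ≤ Real.exp (-s*(1+a^2) + 2*s^2*(1+a^2)/(1-2*s))) := by
  have h1 : (0:ℝ) < 1 - 2*s := by linarith
  have h2 : (0:ℝ) < 1 + 2*s := by linarith
  constructor
  · rw [(gaussian_exp_sq s a hs).2]
    have hsq := sqrt_le_exp_pos hs0 hs
    have heq : s*a^2/(1-2*s) = s*a^2 + 2*s^2*a^2/(1-2*s) := by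
      rw [add_div' _ _ _ h1.ne']; congr 1; ring
    calc Real.sqrt (1-2*s)⁻¹ * Real.exp (s*a^2/(1-2*s))
        ≤ Real.exp (s + 2*s^2/(1-2*s)) * Real.exp (s*a^2/(1-2*s)) := by
          exact mul_le_mul_of_nonneg_right hsq (Real.exp_pos _).le
      _ = Real.exp (s*(1+a^2) + 2*s^2*(1+a^2)/(1-2*s)) := by
          rw [← Real.exp_add, heq]; try ring_nf
  · rw [(gaussian_exp_sq (-s) a (by linarith)).2]
    have hsq := sqrt_le_exp_neg hs0 hs
    have he1 : (1 - 2*(-s))⁻¹ = (1+2*s)⁻¹ := by ring_nf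
    have he2 : -s*a^2/(1-2*(-s)) ≤ -s*a^2 + 2*s^2*a^2/(1-2*s) := by
      rw [neg_mul, neg_div, show (1-2*(-s)) = 1+2*s by ring]
      have : s*a^2/(1+2*s) = s*a^2 - 2*s^2*a^2/(1+2*s) := by field_simp; ring
      rw [this]
      have : 2*s^2*a^2/(1+2*s) ≤ 2*s^2*a^2/(1-2*s) := by
        apply div_le_div_of_nonneg_left (by positivity) h1 (by linarith)
      linarith
    calc Real.sqrt (1-2*(-s))⁻¹ * Real.exp (-s*a^2/(1-2*(-s)))
        ≤ Real.exp (-s + 2*s^2/(1-2*s)) * Real.exp (-s*a^2 + 2*s^2*a^2/(1-2*s)) := by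
          rw [he1]
          exact mul_le_mul hsq (Real.exp_le_exp.mpr he2) (Real.exp_pos _).le (Real.exp_pos _).le
      _ = Real.exp (-s*(1+a^2) + 2*s^2*(1+a^2)/(1-2*s)) := by
          rw [← Real.exp_add]; try ring_nf

lemma chernoff_fixed {Ω : Type*} [MeasurableSpace Ω] (P : Measure Ω) [IsProbabilityMeasure P]
    {k : ℕ} (hk : 1 ≤ k) (v : Ω → Fin k → ℝ)
    (hmeas : ∀ i, Measurable fun ω => v ω i)
    (hIndep : iIndepFun (fun i ω => v ω i) P)
    (hlaw : ∀ i, P.map (fun ω => v ω i) = gaussianReal 0 1)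
    (m : Fin k → ℝ) (t : ℝ) (ht : 0 < t) :
    (P {ω | t + ((k:ℝ) + ∑ i, m i ^2) ≤ ∑ i, (v ω i + m i)^2}).toReal
        ≤ Real.exp (-(t^2/(4*(t + 2*((k:ℝ) + ∑ i, m i ^2))))) ∧
    (P {ω | ∑ i, (v ω i + m i)^2 ≤ ((k:ℝ) + ∑ i, m i ^2) - t}).toReal
        ≤ Real.exp (-(t^2/(4*(t + 2*((k:ℝ) + ∑ i, m i ^2))))) := by
  set c : ℝ := (k:ℝ) + ∑ i, m i ^2 with hc_def
  have hc : (1:ℝ) ≤ c := by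
    have h1 : (1:ℝ) ≤ (k:ℝ) := by exact_mod_cast hk
    have h2 : (0:ℝ) ≤ ∑ i, m i ^2 := Finset.sum_nonneg fun i _ => sq_nonneg _
    linarith
  have htc : (0:ℝ) < t + 2*c := by linarith
  set s : ℝ := t/(2*(t+2*c)) with hs_def
  have hs0 : 0 < s := by positivity
  have hs : s < 1/2 := by
    rw [hs_def, div_lt_iff₀ (by linarith)]
    nlinarith
  have h12s : (0:ℝ) < 1 - 2*s := by linarith
  set X : Fin k → Ω → ℝ := fun i ω => (v ω i + m i)^2 with hX_def
  have hXmeas : ∀ i, Measurable (X i) := fun i =>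
    ((hmeas i).add_const (m i)).pow_const 2
  have hXindep : iIndepFun X P :=
    hIndep.comp (fun i x => (x + m i)^2)
      (fun i => (measurable_id.add_const _).pow_const 2)
  have hcont : ∀ σ a : ℝ, Continuous fun x : ℝ => Real.exp (σ*(x+a)^2) := fun σ a =>
    Real.continuous_exp.comp ((continuous_const.mul ((continuous_id.add continuous_const).pow 2)) : Continuous fun x : ℝ => σ*(x+_)^2)
  have hmgf : ∀ (i : Fin k) (σ : ℝ), mgf (X i) P σ
      = ∫ x, Real.exp (σ*(x + m i)^2) ∂(gaussianReal 0 1) := by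
    intro i σ
    rw [mgf, ← hlaw i, integral_map (hmeas i).aemeasurable
      ((hcont σ (m i)).aestronglyMeasurable)]
  have hXint : ∀ (i : Fin k) (σ : ℝ), σ < 1/2 →
      Integrable (fun ω => Real.exp (σ * X i ω)) P := by
    intro i σ hσ
    have := (gaussian_exp_sq σ (m i) hσ).1
    rw [← hlaw i] at this
    have h2 := (integrable_map_measure ((hcont σ (m i)).aestronglyMeasurable)
      (hmeas i).aemeasurable).mp this
    exact h2
  have hsumA : ∑ i, (1 + m i ^2) = c := by
    rw [Finset.sum_add_distrib]
    simp [hc_def]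
  -- mgf of the sum at σ = s and σ = -s
  have hmgf_sum : ∀ σ : ℝ, mgf (∑ i, X i) P σ = ∏ i, mgf (X i) P σ := fun σ =>
    hXindep.mgf_sum hXmeas Finset.univ
  have hint_sum : ∀ σ : ℝ, σ < 1/2 →
      Integrable (fun ω => Real.exp (σ * (∑ i, X i) ω)) P := fun σ hσ =>
    hXindep.integrable_exp_mul_sum hXmeas (fun i _ => hXint i σ hσ)
  have hbound_pos : mgf (∑ i, X i) P s ≤ Real.exp (s*c + 2*s^2*c/(1-2*s)) := by
    rw [hmgf_sum s]
    calc ∏ i, mgf (X i) P s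
        ≤ ∏ i, Real.exp (s*(1 + m i ^2) + 2*s^2*(1 + m i ^2)/(1-2*s)) := by
          refine Finset.prod_le_prod (fun i _ => mgf_nonneg) (fun i _ => ?_)
          rw [hmgf i s]
          exact (gaussian_mgf_bound s (m i) hs0.le hs).1
      _ = Real.exp (∑ i, (s*(1 + m i ^2) + 2*s^2*(1 + m i ^2)/(1-2*s))) :=
          (Real.exp_sum _ _).symm
      _ = Real.exp (s*c + 2*s^2*c/(1-2*s)) := by
          congr 1
          have h : ∀ i : Fin k, s*(1 + m i ^2) + 2*s^2*(1 + m i ^2)/(1-2*s)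
              = (s + 2*s^2/(1-2*s)) * (1 + m i ^2) := fun i => by ring
          simp_rw [h, ← Finset.mul_sum, hsumA]
          ring
  have hbound_neg : mgf (∑ i, X i) P (-s) ≤ Real.exp (-(s*c) + 2*s^2*c/(1-2*s)) := by
    rw [hmgf_sum (-s)]
    calc ∏ i, mgf (X i) P (-s)
        ≤ ∏ i, Real.exp (-s*(1 + m i ^2) + 2*s^2*(1 + m i ^2)/(1-2*s)) := by
          refine Finset.prod_le_prod (fun i _ => mgf_nonneg) (fun i _ => ?_)
          rw [hmgf i (-s)]
          have := (gaussian_mgf_bound s (m i) hs0.le hs).2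
          simpa [neg_mul] using this
      _ = Real.exp (∑ i, (-s*(1 + m i ^2) + 2*s^2*(1 + m i ^2)/(1-2*s))) :=
          (Real.exp_sum _ _).symm
      _ = Real.exp (-(s*c) + 2*s^2*c/(1-2*s)) := by
          congr 1
          have h : ∀ i : Fin k, -s*(1 + m i ^2) + 2*s^2*(1 + m i ^2)/(1-2*s)
              = (-s + 2*s^2/(1-2*s)) * (1 + m i ^2) := fun i => by ring
          simp_rw [h, ← Finset.mul_sum, hsumA]
          ring
  have halg : -(s*t) + 2*s^2*c/(1-2*s) = -(t^2/(4*(t + 2*c))) := by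
    rw [hs_def]
    have h2 : (1:ℝ) - 2*(t/(2*(t+2*c))) = 2*c/(t+2*c) := by
      field_simp
      ring
    rw [h2]
    field_simp
    ring
  have hset : ∀ ω : Ω, (∑ i, X i) ω = ∑ i, (v ω i + m i)^2 := by
    intro ω; simp [hX_def]
  constructor
  · have h1 := measure_ge_le_exp_mul_mgf (μ := P) (X := ∑ i, X i) (t + c) hs0.le
      (hint_sum s hs)
    have h2 : {ω | t + c ≤ ∑ i, (v ω i + m i)^2} = {ω | t + c ≤ (∑ i, X i) ω} := by
      ext ω; rw [Set.mem_setOf_eq, Set.mem_setOf_eq, hset ω]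
    rw [h2]
    calc (P {ω | t + c ≤ (∑ i, X i) ω}).toReal
        ≤ Real.exp (-s * (t+c)) * mgf (∑ i, X i) P s := h1
      _ ≤ Real.exp (-s * (t+c)) * Real.exp (s*c + 2*s^2*c/(1-2*s)) := by
          exact mul_le_mul_of_nonneg_left hbound_pos (Real.exp_pos _).le
      _ = Real.exp (-(s*t) + 2*s^2*c/(1-2*s)) := by
          rw [← Real.exp_add]; congr 1; ring
      _ = Real.exp (-(t^2/(4*(t + 2*c)))) := by rw [halg]
  · have h1 := measure_le_le_exp_mul_mgf (μ := P) (X := ∑ i, X i) (c - t)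
      (neg_nonpos.mpr hs0.le) (hint_sum (-s) (by linarith))
    have h2 : {ω | ∑ i, (v ω i + m i)^2 ≤ c - t} = {ω | (∑ i, X i) ω ≤ c - t} := by
      ext ω; rw [Set.mem_setOf_eq, Set.mem_setOf_eq, hset ω]
    rw [h2]
    calc (P {ω | (∑ i, X i) ω ≤ c - t}).toReal
        ≤ Real.exp (-(-s) * (c-t)) * mgf (∑ i, X i) P (-s) := h1
      _ ≤ Real.exp (-(-s) * (c-t)) * Real.exp (-(s*c) + 2*s^2*c/(1-2*s)) := by
          exact mul_le_mul_of_nonneg_left hbound_neg (Real.exp_pos _).le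
      _ = Real.exp (-(s*t) + 2*s^2*c/(1-2*s)) := by
          rw [← Real.exp_add]; congr 1; ring
      _ = Real.exp (-(t^2/(4*(t + 2*c)))) := by rw [halg]

namespace Stmt14

/-- Tail bound for a noncentral chi-square with random noncentrality: for `d ≥ k ≥ 1`, `μv` a
random vector in `ℝᵏ` with `‖μv‖² > 0` a.s., and `v` a vector of `k` i.i.d. standard normals
independent of `μv` (so that, conditionally on `μv`, `‖v + μv‖²` is noncentral chi-square with
`k` degrees of freedom and noncentrality `B = ‖μv‖²`), for every `ε > 0`,
`P(|‖v+μv‖²/d - (k+B)/d| ≥ ε) ≤ 2 E[exp(-d ε²/(4(ε + 2(k/d + B/d))))]` and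
`P(‖v+μv‖²/d - (k+B)/d ≥ ε) ≤ E[exp(-d ε²/(4(ε + 2(k/d + B/d))))]`. -/
theorem noncentral_chi_square_tail (d k : ℕ) (hk : 1 ≤ k) (hkd : k ≤ d)
    {Ω : Type*} [MeasurableSpace Ω] (P : Measure Ω) [IsProbabilityMeasure P]
    (v μv : Ω → Fin k → ℝ)
    (hmeas : ∀ i, Measurable fun ω => v ω i)
    (hμmeas : Measurable μv)
    (hIndep : iIndepFun (fun i ω => v ω i) P)
    (hlaw : ∀ i, P.map (fun ω => v ω i) = gaussianReal 0 1)
    (hvμIndep : IndepFun v μv P)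
    (hpos : ∀ᵐ ω ∂P, 0 < ∑ i, μv ω i ^ 2)
    (ε : ℝ) (hε : 0 < ε) :
    P {ω | ε ≤ |(∑ i, (v ω i + μv ω i) ^ 2) / (d : ℝ) -
          ((k : ℝ) + ∑ i, μv ω i ^ 2) / (d : ℝ)|}
        ≤ ENNReal.ofReal (2 * ∫ ω, Real.exp (- (d : ℝ) * ε ^ 2 /
            (4 * (ε + 2 * ((k : ℝ) / (d : ℝ) + (∑ i, μv ω i ^ 2) / (d : ℝ))))) ∂P) ∧
    P {ω | ε ≤ (∑ i, (v ω i + μv ω i) ^ 2) / (d : ℝ) -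
          ((k : ℝ) + ∑ i, μv ω i ^ 2) / (d : ℝ)}
        ≤ ENNReal.ofReal (∫ ω, Real.exp (- (d : ℝ) * ε ^ 2 /
            (4 * (ε + 2 * ((k : ℝ) / (d : ℝ) + (∑ i, μv ω i ^ 2) / (d : ℝ))))) ∂P) := by
  have _hpos := hpos
  classical
  have hd : (0:ℝ) < (d:ℝ) := by
    have : 1 ≤ d := hk.trans hkd
    exact_mod_cast this
  have hv : Measurable v := measurable_pi_iff.mpr hmeas
  set t : ℝ := (d:ℝ)*ε with ht_def
  have ht : 0 < t := mul_pos hd hε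
  set h : (Fin k → ℝ) → ℝ := fun m => Real.exp (- (d : ℝ) * ε ^ 2 /
      (4 * (ε + 2 * ((k : ℝ) / (d : ℝ) + (∑ i, m i ^ 2) / (d : ℝ))))) with hh_def
  have hBnonneg : ∀ m : Fin k → ℝ, (0:ℝ) ≤ ∑ i, m i ^2 :=
    fun m => Finset.sum_nonneg fun i _ => sq_nonneg _
  have hknn : (0:ℝ) ≤ (k:ℝ) := Nat.cast_nonneg k
  have hden : ∀ m : Fin k → ℝ, 0 < ε + 2 * ((k:ℝ)/(d:ℝ) + (∑ i, m i ^2)/(d:ℝ)) := by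
    intro m
    have h1 := hBnonneg m
    have h2 : 0 ≤ (k:ℝ)/(d:ℝ) := div_nonneg hknn hd.le
    have h3 : 0 ≤ (∑ i, m i ^2)/(d:ℝ) := div_nonneg h1 hd.le
    linarith
  have hexp_eq : ∀ m : Fin k → ℝ,
      Real.exp (-(t^2/(4*(t + 2*((k:ℝ) + ∑ i, m i ^2))))) = h m := by
    intro m
    rw [hh_def]
    congr 1
    have h1 : (0:ℝ) < t + 2*((k:ℝ) + ∑ i, m i ^2) := by
      have := hBnonneg m; linarith
    have hne1 : (d:ℝ) ≠ 0 := hd.ne'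
    have hne2 : t + 2*((k:ℝ) + ∑ i, m i ^2) ≠ 0 := h1.ne'
    have hne3 : ε + 2 * ((k:ℝ)/(d:ℝ) + (∑ i, m i ^2)/(d:ℝ)) ≠ 0 := (hden m).ne'
    rw [ht_def] at hne2 ⊢
    field_simp
  -- pointwise upper/lower chernoff bounds as ENNReal
  have hUb : ∀ m : Fin k → ℝ,
      P {ω | t + ((k:ℝ) + ∑ i, m i ^2) ≤ ∑ i, (v ω i + m i)^2} ≤ ENNReal.ofReal (h m) := by
    intro m
    have h1 := (chernoff_fixed P hk v hmeas hIndep hlaw m t ht).1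
    rw [hexp_eq m] at h1
    calc P {ω | t + ((k:ℝ) + ∑ i, m i ^2) ≤ ∑ i, (v ω i + m i)^2}
        = ENNReal.ofReal ((P {ω | t + ((k:ℝ) + ∑ i, m i ^2) ≤ ∑ i, (v ω i + m i)^2}).toReal) :=
          (ENNReal.ofReal_toReal (measure_ne_top _ _)).symm
      _ ≤ ENNReal.ofReal (h m) := ENNReal.ofReal_le_ofReal h1
  have hLb : ∀ m : Fin k → ℝ,
      P {ω | ∑ i, (v ω i + m i)^2 ≤ ((k:ℝ) + ∑ i, m i ^2) - t} ≤ ENNReal.ofReal (h m) := by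
    intro m
    have h1 := (chernoff_fixed P hk v hmeas hIndep hlaw m t ht).2
    rw [hexp_eq m] at h1
    calc P {ω | ∑ i, (v ω i + m i)^2 ≤ ((k:ℝ) + ∑ i, m i ^2) - t}
        = ENNReal.ofReal ((P {ω | ∑ i, (v ω i + m i)^2 ≤ ((k:ℝ) + ∑ i, m i ^2) - t}).toReal) :=
          (ENNReal.ofReal_toReal (measure_ne_top _ _)).symm
      _ ≤ ENNReal.ofReal (h m) := ENNReal.ofReal_le_ofReal h1
  -- continuity and measurability
  have hF : Continuous fun p : (Fin k → ℝ) × (Fin k → ℝ) =>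
      (∑ i, (p.2 i + p.1 i)^2) - ((k:ℝ) + ∑ i, (p.1 i)^2) := by
    apply Continuous.sub
    · exact continuous_finset_sum _ fun i _ =>
        (((continuous_apply i).comp continuous_snd).add
          ((continuous_apply i).comp continuous_fst)).pow 2
    · exact continuous_const.add (continuous_finset_sum _ fun i _ =>
        ((continuous_apply i).comp continuous_fst).pow 2)
  have hTm : ∀ m : Fin k → ℝ, Measurable fun x : Fin k → ℝ => ∑ i, (x i + m i)^2 :=
    fun m => Finset.measurable_sum _ fun i _ =>
      ((measurable_pi_apply i).add_const _).pow_const 2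
  have hhcont : Continuous h := by
    rw [hh_def]
    apply Real.continuous_exp.comp
    apply Continuous.div continuous_const
    · apply continuous_const.mul
      apply continuous_const.add
      apply continuous_const.mul
      apply continuous_const.add
      exact (continuous_finset_sum _ fun i _ => (continuous_apply i).pow 2).div_const _
    · intro m
      have := hden m
      positivity
  have hh_pos : ∀ m, 0 < h m := fun m => Real.exp_pos _
  have hh_le_one : ∀ m, h m ≤ 1 := by
    intro m
    rw [hh_def]
    apply Real.exp_le_one_iff.mpr
    apply div_nonpos_of_nonpos_of_nonneg
    · rw [neg_mul]; exact neg_nonpos.mpr (by positivity)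
    · exact le_of_lt (by have := hden m; positivity)
  have hInt : Integrable (fun ω => h (μv ω)) P := by
    refine Integrable.mono' (integrable_const (1:ℝ))
      ((hhcont.measurable.comp hμmeas).aestronglyMeasurable) (ae_of_all _ fun ω => ?_)
    rw [Real.norm_eq_abs, abs_of_pos (hh_pos _)]
    exact hh_le_one _
  -- product structure
  have hmap : P.map (fun ω => (μv ω, v ω)) = (P.map μv).prod (P.map v) :=
    (indepFun_iff_map_prod_eq_prod_map_map hμmeas.aemeasurable hv.aemeasurable).mp
      hvμIndep.symm
  haveI : IsProbabilityMeasure (P.map μv) := Measure.isProbabilityMeasure_map hμmeas.aemeasurable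
  haveI : IsProbabilityMeasure (P.map v) := Measure.isProbabilityMeasure_map hv.aemeasurable
  set S1 : Set ((Fin k → ℝ) × (Fin k → ℝ)) :=
    {p | t ≤ |(∑ i, (p.2 i + p.1 i)^2) - ((k:ℝ) + ∑ i, (p.1 i)^2)|} with hS1_def
  set S2 : Set ((Fin k → ℝ) × (Fin k → ℝ)) :=
    {p | t ≤ (∑ i, (p.2 i + p.1 i)^2) - ((k:ℝ) + ∑ i, (p.1 i)^2)} with hS2_def
  have hS1 : MeasurableSet S1 := measurableSet_le measurable_const hF.measurable.abs
  have hS2 : MeasurableSet S2 := measurableSet_le measurable_const hF.measurable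
  -- sections of S1 and S2
  have hsec2 : ∀ m : Fin k → ℝ, (P.map v) (Prod.mk m ⁻¹' S2) ≤ ENNReal.ofReal (h m) := by
    intro m
    have heq : Prod.mk m ⁻¹' S2
        = {x : Fin k → ℝ | t + ((k:ℝ) + ∑ i, m i ^2) ≤ ∑ i, (x i + m i)^2} := by
      ext x
      simp only [Set.mem_preimage, hS2_def, Set.mem_setOf_eq]
      exact le_sub_iff_add_le
    rw [heq, Measure.map_apply hv (measurableSet_le measurable_const (hTm m))]
    exact hUb m
  have hsec1 : ∀ m : Fin k → ℝ, (P.map v) (Prod.mk m ⁻¹' S1) ≤ ENNReal.ofReal (2 * h m) := by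
    intro m
    have hsub : Prod.mk m ⁻¹' S1 ⊆
        {x : Fin k → ℝ | t + ((k:ℝ) + ∑ i, m i ^2) ≤ ∑ i, (x i + m i)^2} ∪
        {x : Fin k → ℝ | ∑ i, (x i + m i)^2 ≤ ((k:ℝ) + ∑ i, m i ^2) - t} := by
      intro x hx
      simp only [Set.mem_preimage, hS1_def, Set.mem_setOf_eq] at hx
      rcases le_abs.mp hx with h1 | h1
      · left; exact le_sub_iff_add_le.mp h1
      · right; simp only [Set.mem_setOf_eq]; linarith
    calc (P.map v) (Prod.mk m ⁻¹' S1)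
        ≤ (P.map v) ({x : Fin k → ℝ | t + ((k:ℝ) + ∑ i, m i ^2) ≤ ∑ i, (x i + m i)^2} ∪
            {x : Fin k → ℝ | ∑ i, (x i + m i)^2 ≤ ((k:ℝ) + ∑ i, m i ^2) - t}) :=
          measure_mono hsub
      _ ≤ (P.map v) {x : Fin k → ℝ | t + ((k:ℝ) + ∑ i, m i ^2) ≤ ∑ i, (x i + m i)^2} +
          (P.map v) {x : Fin k → ℝ | ∑ i, (x i + m i)^2 ≤ ((k:ℝ) + ∑ i, m i ^2) - t} :=
          measure_union_le _ _
      _ ≤ ENNReal.ofReal (h m) + ENNReal.ofReal (h m) := by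
          refine add_le_add ?_ ?_
          · rw [Measure.map_apply hv (measurableSet_le measurable_const (hTm m))]
            exact hUb m
          · rw [Measure.map_apply hv (measurableSet_le (hTm m) measurable_const)]
            exact hLb m
      _ = ENNReal.ofReal (2 * h m) := by
          rw [← ENNReal.ofReal_add (hh_pos m).le (hh_pos m).le]; congr 1; ring
  -- lintegral of ofReal h over the law of μv
  have hlint : ∀ c : ℝ, 0 ≤ c →
      ∫⁻ m, ENNReal.ofReal (c * h m) ∂(P.map μv)
        = ENNReal.ofReal (c * ∫ ω, h (μv ω) ∂P) := by
    intro c hc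
    rw [lintegral_map (by
        exact (continuous_const.mul hhcont).measurable.ennreal_ofReal) hμmeas]
    rw [← ofReal_integral_eq_lintegral_ofReal ((hInt.const_mul c))
      (ae_of_all _ fun ω => mul_nonneg hc (hh_pos _).le)]
    rw [integral_const_mul]
  -- main identities for the two events
  have hpair : Measurable fun ω => (μv ω, v ω) := hμmeas.prodMk hv
  constructor
  · have hevent : {ω | ε ≤ |(∑ i, (v ω i + μv ω i) ^ 2) / (d : ℝ) -
          ((k : ℝ) + ∑ i, μv ω i ^ 2) / (d : ℝ)|} = (fun ω => (μv ω, v ω)) ⁻¹' S1 := by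
      ext ω
      simp only [Set.mem_setOf_eq, Set.mem_preimage, hS1_def]
      rw [div_sub_div_same, abs_div, abs_of_pos hd, le_div_iff₀ hd, ht_def, mul_comm]
    rw [hevent, ← Measure.map_apply hpair hS1, hmap, Measure.prod_apply hS1]
    calc ∫⁻ m, (P.map v) (Prod.mk m ⁻¹' S1) ∂(P.map μv)
        ≤ ∫⁻ m, ENNReal.ofReal (2 * h m) ∂(P.map μv) := lintegral_mono fun m => hsec1 m
      _ = ENNReal.ofReal (2 * ∫ ω, h (μv ω) ∂P) := hlint 2 (by norm_num)
  · have hevent : {ω | ε ≤ (∑ i, (v ω i + μv ω i) ^ 2) / (d : ℝ) -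
          ((k : ℝ) + ∑ i, μv ω i ^ 2) / (d : ℝ)} = (fun ω => (μv ω, v ω)) ⁻¹' S2 := by
      ext ω
      simp only [Set.mem_setOf_eq, Set.mem_preimage, hS2_def]
      rw [div_sub_div_same, le_div_iff₀ hd, ht_def, mul_comm]
    rw [hevent, ← Measure.map_apply hpair hS2, hmap, Measure.prod_apply hS2]
    calc ∫⁻ m, (P.map v) (Prod.mk m ⁻¹' S2) ∂(P.map μv)
        ≤ ∫⁻ m, ENNReal.ofReal (1 * h m) ∂(P.map μv) := by
          refine lintegral_mono fun m => ?_
          rw [one_mul]; exact hsec2 m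
      _ = ENNReal.ofReal (1 * ∫ ω, h (μv ω) ∂P) := hlint 1 (by norm_num)
      _ = ENNReal.ofReal (∫ ω, h (μv ω) ∂P) := by rw [one_mul]


end Stmt14
end

section
/- (Deterministic weight inequalities.) Let x₁, x₂ ∈ [0,1], y₁, y₂ ≥ 0, and let k₁, k₂, k, d be positive integers with k₁ + k₂ = k < d. Define q = (1−x₂)²·k/(d−k+1) + (x₂−x₁)(2−x₁−x₂)·k₁/(d−k₁+1) + 1 + x₁²y₁ + x₂²y₂ + (x₁−x₂)²·(k₁/(d−k₁+1))·y₂. Then: (1) | (1−x₂)²·k/(d−k+1) + (x₂−x₁)(2−x₁−x₂)·k₁/(d−k₁+1) + 1 − x₂² − (x₁−x₂)²·k₁/(d−k₁+1) | / q ≤ 1/(1−k/d); (2) x₁²/q ≤ 1/(1 + y₁ + y₂·(k₁/d)·(1−k₁/d)) ≤ 1; (3) | x₂² − x₁²·k₁/d + (x₁−x₂)²·k₁/(d−k₁+1) | / q ≤ 1/((1−k₁/d)(1+y₂)) ≤ 1/(1−k₁/d). -/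
namespace Stmt18

set_option maxHeartbeats 1000000 in
lemma key (a b c e x₁ x₂ y₁ y₂ : ℝ)
    (hx₁0 : 0 ≤ x₁) (hx₁1 : x₁ ≤ 1) (hx₂0 : 0 ≤ x₂) (hx₂1 : x₂ ≤ 1)
    (hy₁ : 0 ≤ y₁) (hy₂ : 0 ≤ y₂)
    (hc0 : 0 ≤ c) (hcb : c ≤ b) (hba : b ≤ a)
    (hc1 : c < 1) (he0 : 0 ≤ e) (he1 : e < 1)
    (hbe : b * (1 - e) ≤ e) (hbc : b * (1 - c) ≤ c) :
    |(1 - x₂) ^ 2 * a + (x₂ - x₁) * (2 - x₁ - x₂) * b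
        + 1 - x₂ ^ 2 - (x₁ - x₂) ^ 2 * b| /
      ((1 - x₂) ^ 2 * a + (x₂ - x₁) * (2 - x₁ - x₂) * b
        + 1 + x₁ ^ 2 * y₁ + x₂ ^ 2 * y₂ + (x₁ - x₂) ^ 2 * b * y₂)
      ≤ 1 / (1 - e) ∧
    x₁ ^ 2 / ((1 - x₂) ^ 2 * a + (x₂ - x₁) * (2 - x₁ - x₂) * b
        + 1 + x₁ ^ 2 * y₁ + x₂ ^ 2 * y₂ + (x₁ - x₂) ^ 2 * b * y₂)
      ≤ 1 / (1 + y₁ + y₂ * c * (1 - c)) ∧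
    |x₂ ^ 2 - x₁ ^ 2 * c + (x₁ - x₂) ^ 2 * b| /
      ((1 - x₂) ^ 2 * a + (x₂ - x₁) * (2 - x₁ - x₂) * b
        + 1 + x₁ ^ 2 * y₁ + x₂ ^ 2 * y₂ + (x₁ - x₂) ^ 2 * b * y₂)
      ≤ 1 / ((1 - c) * (1 + y₂)) := by
  have hb0 : 0 ≤ b := le_trans hc0 hcb
  have h1b : (0:ℝ) < 1 + b := by linarith
  set q : ℝ := (1 - x₂) ^ 2 * a + (x₂ - x₁) * (2 - x₁ - x₂) * b
        + 1 + x₁ ^ 2 * y₁ + x₂ ^ 2 * y₂ + (x₁ - x₂) ^ 2 * b * y₂ with hqdef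
  have hA : 0 ≤ (1 - x₂) ^ 2 * (a - b) + (1 - x₁) ^ 2 * b := by
    have := mul_nonneg (sq_nonneg (1 - x₂)) (sub_nonneg.2 hba)
    have := mul_nonneg (sq_nonneg (1 - x₁)) hb0
    linarith
  have hy2a : 0 ≤ x₂ ^ 2 * y₂ + (x₁ - x₂) ^ 2 * b * y₂ := by positivity
  have hy1a : 0 ≤ x₁ ^ 2 * y₁ := by positivity
  have hq1 : 1 ≤ q := by rw [hqdef]; linarith [hA, hy1a, hy2a]
  have hq0 : 0 < q := by linarith
  have hd12 : (x₁ - x₂) ^ 2 ≤ 1 := by nlinarith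
  have hx2sq : x₂ ^ 2 ≤ 1 := by nlinarith
  have hx1sq : x₁ ^ 2 ≤ 1 := by nlinarith
  refine ⟨?_, ?_, ?_⟩
  · rw [div_le_div_iff₀ hq0 (by linarith : (0:ℝ) < 1 - e)]
    rcases abs_cases ((1 - x₂) ^ 2 * a + (x₂ - x₁) * (2 - x₁ - x₂) * b
        + 1 - x₂ ^ 2 - (x₁ - x₂) ^ 2 * b) with ⟨heq, hs⟩ | ⟨heq, hs⟩ <;> rw [heq]
    · -- N ≥ 0 : N(1-e) ≤ q
      have hNq : (1 - x₂) ^ 2 * a + (x₂ - x₁) * (2 - x₁ - x₂) * b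
          + 1 - x₂ ^ 2 - (x₁ - x₂) ^ 2 * b ≤ q := by
        rw [hqdef]
        linarith [sq_nonneg x₂, mul_nonneg (sq_nonneg (x₁ - x₂)) hb0, hy1a, hy2a]
      linarith [mul_nonneg hs he0]
    · -- N < 0 : -N ≤ b, so -N(1-e) ≤ b(1-e) ≤ e ≤ 1 ≤ q
      have hNb : -((1 - x₂) ^ 2 * a + (x₂ - x₁) * (2 - x₁ - x₂) * b
          + 1 - x₂ ^ 2 - (x₁ - x₂) ^ 2 * b) ≤ b := by
        linarith [hA, mul_le_mul_of_nonneg_right hd12 hb0, hx2sq]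
      linarith [mul_le_mul_of_nonneg_right hNb (by linarith : (0:ℝ) ≤ 1 - e), hbe, hq1, he1]
  · have hy2c : 0 ≤ y₂ * c * (1 - c) := mul_nonneg (mul_nonneg hy₂ hc0) (by linarith)
    have hden2 : (0:ℝ) < 1 + y₁ + y₂ * c * (1 - c) := by linarith
    rw [div_le_div_iff₀ hq0 hden2]
    have hs : c * (1 - c) * (1 + b) ≤ b := by
      linarith [mul_le_mul_of_nonneg_left hbc hc0]
    have hkey2 : x₁ ^ 2 * (c * (1 - c)) ≤ x₂ ^ 2 + (x₁ - x₂) ^ 2 * b := by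
      nlinarith [sq_nonneg ((1 + b) * x₂ - b * x₁),
        mul_nonneg (sq_nonneg x₁) (sub_nonneg.2 hs), hb0]
    have := mul_le_mul_of_nonneg_left hkey2 hy₂
    rw [hqdef]
    linarith [hA, hx1sq, this]
  · have hden3 : (0:ℝ) < (1 - c) * (1 + y₂) := by
      apply mul_pos <;> linarith
    rw [div_le_div_iff₀ hq0 hden3]
    rcases abs_cases (x₂ ^ 2 - x₁ ^ 2 * c + (x₁ - x₂) ^ 2 * b) with ⟨heq, hs⟩ | ⟨heq, hs⟩ <;>
      rw [heq]
    · -- N₃ ≥ 0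
      have h31 : (x₂ ^ 2 - x₁ ^ 2 * c + (x₁ - x₂) ^ 2 * b) * (1 - c)
          ≤ 1 + ((1 - x₂) ^ 2 * (a - b) + (1 - x₁) ^ 2 * b) := by
        have t1 := mul_le_mul_of_nonneg_left hbc (sq_nonneg (x₁ - x₂))
        have t2 := mul_le_mul_of_nonneg_right hx2sq (by linarith : (0:ℝ) ≤ 1 - c)
        have t3 := mul_le_mul_of_nonneg_right hd12 hc0
        have t4 : 0 ≤ x₁ ^ 2 * c * (1 - c) :=
          mul_nonneg (mul_nonneg (sq_nonneg x₁) hc0) (by linarith)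
        nlinarith [hA]
      have h32 : (x₂ ^ 2 - x₁ ^ 2 * c + (x₁ - x₂) ^ 2 * b) * ((1 - c) * y₂)
          ≤ (x₂ ^ 2 + (x₁ - x₂) ^ 2 * b) * y₂ := by
        have hin : (x₂ ^ 2 - x₁ ^ 2 * c + (x₁ - x₂) ^ 2 * b) * (1 - c)
            ≤ x₂ ^ 2 + (x₁ - x₂) ^ 2 * b := by
          linarith [mul_nonneg hs hc0, mul_nonneg (sq_nonneg x₁) hc0]
        calc (x₂ ^ 2 - x₁ ^ 2 * c + (x₁ - x₂) ^ 2 * b) * ((1 - c) * y₂)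
            = ((x₂ ^ 2 - x₁ ^ 2 * c + (x₁ - x₂) ^ 2 * b) * (1 - c)) * y₂ := by ring
          _ ≤ (x₂ ^ 2 + (x₁ - x₂) ^ 2 * b) * y₂ := mul_le_mul_of_nonneg_right hin hy₂
      rw [hqdef]
      linarith [h31, h32, hy1a]
    · -- N₃ ≤ 0
      have h1 : b * x₁ ^ 2 ≤ (1 + b) * (x₂ ^ 2 + (x₁ - x₂) ^ 2 * b) := by
        nlinarith [sq_nonneg ((1 + b) * x₂ - b * x₁)]
      have hM : (1 + b) * (-(x₂ ^ 2 - x₁ ^ 2 * c + (x₁ - x₂) ^ 2 * b)) ≤ x₁ ^ 2 * c * b := by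
        linarith [h1, mul_le_mul_of_nonneg_left hcb (sq_nonneg x₁)]
      have hq2 : (1 + b) + y₂ * (b * x₁ ^ 2) ≤ (1 + b) * q := by
        rw [hqdef]
        nlinarith [mul_le_mul_of_nonneg_left h1 hy₂, mul_nonneg h1b.le hA,
          mul_nonneg h1b.le hy1a, mul_nonneg hb0 hy2a]
      have hfin : x₁ ^ 2 * c * b * ((1 - c) * (1 + y₂)) ≤ (1 + b) + y₂ * (b * x₁ ^ 2) := by
        have e1 : x₁ ^ 2 * c * b * (1 - c) ≤ b := by
          nlinarith [mul_le_mul_of_nonneg_left hbc (mul_nonneg (sq_nonneg x₁) hc0), hb0,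
            mul_nonneg (mul_nonneg (sq_nonneg x₁) hc0) hc0]
        have e2 : x₁ ^ 2 * c * b * (1 - c) * y₂ ≤ y₂ * (b * x₁ ^ 2) := by
          have t1 : x₁ ^ 2 * c * (b * (1 - c)) ≤ x₁ ^ 2 * c * c :=
            mul_le_mul_of_nonneg_left hbc (mul_nonneg (sq_nonneg x₁) hc0)
          have t2 : x₁ ^ 2 * (c * c) ≤ x₁ ^ 2 * b := by
            apply mul_le_mul_of_nonneg_left _ (sq_nonneg x₁)
            nlinarith
          nlinarith [mul_le_mul_of_nonneg_right t1 hy₂, mul_le_mul_of_nonneg_right t2 hy₂]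
        nlinarith [e1, e2]
      have hmain : (1 + b) * ((-(x₂ ^ 2 - x₁ ^ 2 * c + (x₁ - x₂) ^ 2 * b))
          * ((1 - c) * (1 + y₂))) ≤ (1 + b) * q := by
        have hstep := mul_le_mul_of_nonneg_right hM hden3.le
        nlinarith [hstep, hfin, hq2]
      have := le_of_mul_le_mul_left hmain h1b
      linarith [this]

set_option maxHeartbeats 1000000 in

/-- Deterministic weight inequalities (Lemma on the weights `q`): for `x₁, x₂ ∈ [0,1]`,
`y₁, y₂ ≥ 0` and positive integers `k₁ + k₂ = k < d`, with
`q = (1-x₂)² k/(d-k+1) + (x₂-x₁)(2-x₁-x₂) k₁/(d-k₁+1) + 1 + x₁²y₁ + x₂²y₂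
     + (x₁-x₂)² (k₁/(d-k₁+1)) y₂`,
the three stated ratio bounds hold. -/
theorem weight_inequalities (k₁ k₂ k d : ℕ)
    (hk₁ : 0 < k₁) (hk₂ : 0 < k₂) (hkk : k₁ + k₂ = k) (hkd : k < d)
    (x₁ x₂ y₁ y₂ : ℝ)
    (hx₁0 : 0 ≤ x₁) (hx₁1 : x₁ ≤ 1) (hx₂0 : 0 ≤ x₂) (hx₂1 : x₂ ≤ 1)
    (hy₁ : 0 ≤ y₁) (hy₂ : 0 ≤ y₂)
    (q : ℝ)
    (hq : q = (1 - x₂) ^ 2 * (k : ℝ) / ((d : ℝ) - (k : ℝ) + 1)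
      + (x₂ - x₁) * (2 - x₁ - x₂) * (k₁ : ℝ) / ((d : ℝ) - (k₁ : ℝ) + 1)
      + 1 + x₁ ^ 2 * y₁ + x₂ ^ 2 * y₂
      + (x₁ - x₂) ^ 2 * ((k₁ : ℝ) / ((d : ℝ) - (k₁ : ℝ) + 1)) * y₂) :
    |(1 - x₂) ^ 2 * (k : ℝ) / ((d : ℝ) - (k : ℝ) + 1)
        + (x₂ - x₁) * (2 - x₁ - x₂) * (k₁ : ℝ) / ((d : ℝ) - (k₁ : ℝ) + 1)
        + 1 - x₂ ^ 2 - (x₁ - x₂) ^ 2 * (k₁ : ℝ) / ((d : ℝ) - (k₁ : ℝ) + 1)| / q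
      ≤ 1 / (1 - (k : ℝ) / (d : ℝ)) ∧
    x₁ ^ 2 / q
      ≤ 1 / (1 + y₁ + y₂ * ((k₁ : ℝ) / (d : ℝ)) * (1 - (k₁ : ℝ) / (d : ℝ))) ∧
    1 / (1 + y₁ + y₂ * ((k₁ : ℝ) / (d : ℝ)) * (1 - (k₁ : ℝ) / (d : ℝ))) ≤ 1 ∧
    |x₂ ^ 2 - x₁ ^ 2 * (k₁ : ℝ) / (d : ℝ)
        + (x₁ - x₂) ^ 2 * (k₁ : ℝ) / ((d : ℝ) - (k₁ : ℝ) + 1)| / q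
      ≤ 1 / ((1 - (k₁ : ℝ) / (d : ℝ)) * (1 + y₂)) ∧
    1 / ((1 - (k₁ : ℝ) / (d : ℝ)) * (1 + y₂)) ≤ 1 / (1 - (k₁ : ℝ) / (d : ℝ)) := by

  -- basic cast facts
  have hK1 : (1:ℝ) ≤ (k₁:ℝ) := by exact_mod_cast hk₁
  have hK1k : (k₁:ℝ) + 1 ≤ (k:ℝ) := by
    have : k₁ + 1 ≤ k := by omega
    exact_mod_cast this
  have hKd : (k:ℝ) + 1 ≤ (d:ℝ) := by exact_mod_cast hkd
  have hd0 : (0:ℝ) < (d:ℝ) := by linarith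
  have hdenA : (0:ℝ) < (d:ℝ) - (k:ℝ) + 1 := by linarith
  have hdenB : (0:ℝ) < (d:ℝ) - (k₁:ℝ) + 1 := by linarith
  set a : ℝ := (k:ℝ) / ((d:ℝ) - (k:ℝ) + 1) with hadef
  set b : ℝ := (k₁:ℝ) / ((d:ℝ) - (k₁:ℝ) + 1) with hbdef
  set c : ℝ := (k₁:ℝ) / (d:ℝ) with hcdef
  set e : ℝ := (k:ℝ) / (d:ℝ) with hedef
  have hc0 : 0 ≤ c := by positivity
  have hcb : c ≤ b := by
    rw [hcdef, hbdef, div_le_div_iff₀ hd0 hdenB]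
    nlinarith
  have hba : b ≤ a := by
    rw [hbdef, hadef, div_le_div_iff₀ hdenB hdenA]
    nlinarith
  have hc1 : c < 1 := by
    rw [hcdef, div_lt_one hd0]; linarith
  have he0 : 0 ≤ e := by positivity
  have he1 : e < 1 := by
    rw [hedef, div_lt_one hd0]; linarith
  have hbe : b * (1 - e) ≤ e := by
    have h1 : b * (1 - e) = ((k₁:ℝ) * ((d:ℝ) - (k:ℝ))) / (((d:ℝ) - (k₁:ℝ) + 1) * (d:ℝ)) := by
      rw [hbdef, hedef]; field_simp
    rw [h1, hedef, div_le_div_iff₀ (by positivity) hd0]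
    have h2 : (k₁:ℝ) * ((d:ℝ) - (k:ℝ)) ≤ (k:ℝ) * ((d:ℝ) - (k₁:ℝ) + 1) := by nlinarith
    nlinarith [mul_le_mul_of_nonneg_right h2 hd0.le]
  have hbc : b * (1 - c) ≤ c := by
    have h1 : b * (1 - c) = ((k₁:ℝ) * ((d:ℝ) - (k₁:ℝ))) / (((d:ℝ) - (k₁:ℝ) + 1) * (d:ℝ)) := by
      rw [hbdef, hcdef]; field_simp
    rw [h1, hcdef, div_le_div_iff₀ (by positivity) hd0]
    have h2 : (k₁:ℝ) * ((d:ℝ) - (k₁:ℝ)) ≤ (k₁:ℝ) * ((d:ℝ) - (k₁:ℝ) + 1) := by nlinarith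
    nlinarith [mul_le_mul_of_nonneg_right h2 hd0.le]
  have hkey := key a b c e x₁ x₂ y₁ y₂ hx₁0 hx₁1 hx₂0 hx₂1 hy₁ hy₂
    hc0 hcb hba hc1 he0 he1 hbe hbc
  have hqeq : q = (1 - x₂) ^ 2 * a + (x₂ - x₁) * (2 - x₁ - x₂) * b
        + 1 + x₁ ^ 2 * y₁ + x₂ ^ 2 * y₂ + (x₁ - x₂) ^ 2 * b * y₂ := by
    rw [hq, hadef, hbdef]; ring
  have hN1 : (1 - x₂) ^ 2 * (k : ℝ) / ((d : ℝ) - (k : ℝ) + 1)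
        + (x₂ - x₁) * (2 - x₁ - x₂) * (k₁ : ℝ) / ((d : ℝ) - (k₁ : ℝ) + 1)
        + 1 - x₂ ^ 2 - (x₁ - x₂) ^ 2 * (k₁ : ℝ) / ((d : ℝ) - (k₁ : ℝ) + 1)
      = (1 - x₂) ^ 2 * a + (x₂ - x₁) * (2 - x₁ - x₂) * b + 1 - x₂ ^ 2 - (x₁ - x₂) ^ 2 * b := by
    rw [hadef, hbdef]; ring
  have hN3 : x₂ ^ 2 - x₁ ^ 2 * (k₁ : ℝ) / (d : ℝ)
        + (x₁ - x₂) ^ 2 * (k₁ : ℝ) / ((d : ℝ) - (k₁ : ℝ) + 1)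
      = x₂ ^ 2 - x₁ ^ 2 * c + (x₁ - x₂) ^ 2 * b := by
    rw [hcdef, hbdef]; ring
  have hden2 : 1 + y₁ + y₂ * ((k₁ : ℝ) / (d : ℝ)) * (1 - (k₁ : ℝ) / (d : ℝ))
      = 1 + y₁ + y₂ * c * (1 - c) := by rw [hcdef]
  rw [hN1, hN3, hqeq, hden2]
  refine ⟨hkey.1, hkey.2.1, ?_, hkey.2.2, ?_⟩
  · have hy2c : 0 ≤ y₂ * c * (1 - c) := mul_nonneg (mul_nonneg hy₂ hc0) (by linarith)
    rw [div_le_one (by linarith)]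
    linarith
  · have h1c : (0:ℝ) < 1 - c := by linarith
    apply one_div_le_one_div_of_le h1c
    nlinarith

end Stmt18
end
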